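/- arXiv:1408.0143 — 10 statements merged into one kernel-verified Lean document; each statement's English description precedes it below -/
import Mathlib

section
/- Let N be a natural number and let λ = (r,s,t) and λ' = (r',s',t') be locations in Δ_N. Then the distance ∂(λ,λ') in the adjacency graph on Δ_N is equal to the maximum of the three absolute values |r−r'|, |s−s'|, |t−t'|. -/
/-- `Δ_N`: the set of triples of natural numbers with sum `N`. -/
def BA.Delta (N : ℕ) : Set (Fin 3 → ℕ) := {v | v 0 + v 1 + v 2 = N}

/-- Adjacency: `u - v = e_i - e_j` (computed in `ℤ³`) for some `i ≠ j`. -/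
def BA.Adj (u v : Fin 3 → ℕ) : Prop :=
  ∃ i j : Fin 3, i ≠ j ∧ ∀ k, (u k : ℤ) - (v k : ℤ) =
    (if k = i then 1 else 0) - (if k = j then 1 else 0)

/-- A walk of length `n` in `Δ_N` from `u` to `v`. -/
def BA.IsWalk (N n : ℕ) (f : ℕ → Fin 3 → ℕ) (u v : Fin 3 → ℕ) : Prop :=
  f 0 = u ∧ f n = v ∧ (∀ i ≤ n, f i ∈ BA.Delta N) ∧ ∀ i < n, BA.Adj (f i) (f (i + 1))

/-- The graph distance on `Δ_N`: the least length of a walk from `u` to `v`. -/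
noncomputable def BA.dist (N : ℕ) (u v : Fin 3 → ℕ) : ℕ :=
  sInf {n | ∃ f : ℕ → Fin 3 → ℕ, BA.IsWalk N n f u v}

lemma BA.adj_bound {u v : Fin 3 → ℕ} (h : BA.Adj u v) (k : Fin 3) :
    ((u k : ℤ) - v k).natAbs ≤ 1 := by
  obtain ⟨i, j, hij, h⟩ := h
  have hk := h k
  have h1 : (0:ℤ) ≤ (if k = i then (1:ℤ) else 0) ∧ (if k = i then (1:ℤ) else 0) ≤ 1 := by
    split <;> simp
  have h2 : (0:ℤ) ≤ (if k = j then (1:ℤ) else 0) ∧ (if k = j then (1:ℤ) else 0) ≤ 1 := by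
    split <;> simp
  omega

lemma BA.lower (N : ℕ) : ∀ (n : ℕ) (f : ℕ → Fin 3 → ℕ) (u v : Fin 3 → ℕ),
    BA.IsWalk N n f u v → ∀ k, ((u k : ℤ) - v k).natAbs ≤ n := by
  intro n
  induction n with
  | zero =>
    rintro f u v ⟨h0, hn, -, -⟩ k
    rw [← h0, hn]
    simp
  | succ n ih =>
    rintro f u v ⟨h0, hn, hmem, hadj⟩ k
    have hadj0 : BA.Adj u (f 1) := by rw [← h0]; exact hadj 0 (by omega)
    have h1 := BA.adj_bound hadj0 k
    have h2 : ((f 1 k : ℤ) - v k).natAbs ≤ n := by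
      refine ih (fun i => f (i + 1)) (f 1) v ⟨rfl, hn, ?_, ?_⟩ k
      · intro i hi; exact hmem (i + 1) (by omega)
      · intro i hi; exact hadj (i + 1) (by omega)
    omega

lemma BA.three_sum (f : Fin 3 → ℤ) (i j k : Fin 3) (hij : i ≠ j) (hik : i ≠ k)
    (hjk : j ≠ k) : f i + f j + f k = f 0 + f 1 + f 2 := by
  fin_cases i <;> fin_cases j <;> fin_cases k <;> simp_all <;> ring

lemma BA.upper (N : ℕ) : ∀ (m : ℕ) (u v : Fin 3 → ℕ), u ∈ BA.Delta N → v ∈ BA.Delta N →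
    (∀ k, ((u k : ℤ) - v k).natAbs ≤ m) →
    ∃ n ≤ m, ∃ f : ℕ → Fin 3 → ℕ, BA.IsWalk N n f u v := by
  intro m
  induction m with
  | zero =>
    intro u v hu hv hd
    have huv : u = v := by
      funext k
      have := hd k
      omega
    subst huv
    exact ⟨0, le_refl 0, fun _ => u, rfl, rfl, fun i hi => by
      interval_cases i; exact hu, fun i hi => by omega⟩
  | succ m ih =>
    intro u v hu hv hd
    by_cases huv : u = v
    · subst huv
      exact ⟨0, by omega, fun _ => u, rfl, rfl, fun i hi => by
        interval_cases i; exact hu, fun i hi => by omega⟩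
    · obtain ⟨k0, hk0⟩ := Function.ne_iff.mp huv
      obtain ⟨i, hmax⟩ := Finite.exists_max (fun k => (u k : ℤ) - v k)
      obtain ⟨j, hmin⟩ := Finite.exists_min (fun k => (u k : ℤ) - v k)
      have sum0 : ((u 0 : ℤ) - v 0) + ((u 1 : ℤ) - v 1) + ((u 2 : ℤ) - v 2) = 0 := by
        have h1 : u 0 + u 1 + u 2 = N := hu
        have h2 : v 0 + v 1 + v 2 = N := hv
        omega
      have hk0' : (u k0 : ℤ) - v k0 ≠ 0 := by
        intro h; exact hk0 (by omega)
      have hk3 : k0 = 0 ∨ k0 = 1 ∨ k0 = 2 := by fin_cases k0 <;> simp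
      have hdij : 1 ≤ (u i : ℤ) - v i ∧ (u j : ℤ) - v j ≤ -1 := by
        have m0 := hmax 0; have m1 := hmax 1; have m2 := hmax 2
        have n0 := hmin 0; have n1 := hmin 1; have n2 := hmin 2
        rcases hk3 with h|h|h <;> rw [h] at hk0' <;> constructor <;> omega
      obtain ⟨hdi, hdj⟩ := hdij
      have hij : i ≠ j := by intro h; rw [h] at hdi; omega
      have hui : 1 ≤ u i := by omega
      set u' : Fin 3 → ℕ := fun k => if k = i then u i - 1 else if k = j then u k + 1 else u k
        with hu'def
      have hstep : ∀ k, (u' k : ℤ) =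
          (u k : ℤ) + (if k = j then 1 else 0) - (if k = i then 1 else 0) := by
        intro k
        by_cases hki : k = i
        · subst hki
          simp [hu'def, hij]
          omega
        · by_cases hkj : k = j
          · subst hkj; simp [hu'def, hki]
          · simp [hu'def, hki, hkj]
      have hu' : u' ∈ BA.Delta N := by
        have h0 := hstep 0; have h1 := hstep 1; have h2 := hstep 2
        have hN : u 0 + u 1 + u 2 = N := hu
        show u' 0 + u' 1 + u' 2 = N
        fin_cases i <;> fin_cases j <;> simp_all <;> omega
      have hadj : BA.Adj u u' := by
        refine ⟨i, j, hij, fun k => ?_⟩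
        rw [hstep k]; ring
      have hd' : ∀ k, ((u' k : ℤ) - v k).natAbs ≤ m := by
        intro k
        have hk := hstep k
        by_cases hki : k = i
        · subst hki
          simp [hij] at hk
          have := hd k
          omega
        · by_cases hkj : k = j
          · subst hkj
            simp [Ne.symm hij] at hk
            have := hd k
            omega
          · simp [hki, hkj] at hk
            have hsum : ((u i : ℤ) - v i) + ((u j : ℤ) - v j) + ((u k : ℤ) - v k)
                = ((u 0 : ℤ) - v 0) + ((u 1 : ℤ) - v 1) + ((u 2 : ℤ) - v 2) :=
              BA.three_sum (fun k => (u k : ℤ) - v k) i j k hij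
                (fun h => hki h.symm) (fun h => hkj h.symm)
            have := hd i
            have := hd j
            omega
      obtain ⟨n, hn, f, hf0, hfn, hfmem, hfadj⟩ := ih u' v hu' hv hd'
      refine ⟨n + 1, by omega, fun t => if t = 0 then u else f (t - 1), by simp, ?_, ?_, ?_⟩
      · simp [hfn]
      · intro t ht
        by_cases ht0 : t = 0
        · simpa [ht0] using hu
        · simp only [ht0, if_neg]
          exact hfmem (t - 1) (by omega)
      · intro t ht
        by_cases ht0 : t = 0
        · subst ht0
          simpa [hf0] using hadj
        · have h1 : t - 1 + 1 = t := by omega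
          simp only [ht0, if_neg, Nat.add_eq_zero, if_neg, and_false]
          have := hfadj (t - 1) (by omega)
          rw [h1] at this
          simpa using this

/-- The distance between two locations of `Δ_N` equals the maximum of the
absolute values of the coordinatewise differences. -/
theorem stmt0 (N : ℕ) (l l' : Fin 3 → ℕ)
    (hl : l ∈ BA.Delta N) (hl' : l' ∈ BA.Delta N) :
    BA.dist N l l' =
      max (max ((l 0 : ℤ) - (l' 0 : ℤ)).natAbs ((l 1 : ℤ) - (l' 1 : ℤ)).natAbs)
        ((l 2 : ℤ) - (l' 2 : ℤ)).natAbs := by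
  set D := max (max ((l 0 : ℤ) - (l' 0 : ℤ)).natAbs ((l 1 : ℤ) - (l' 1 : ℤ)).natAbs)
      ((l 2 : ℤ) - (l' 2 : ℤ)).natAbs with hD
  have hbound : ∀ k, ((l k : ℤ) - l' k).natAbs ≤ D := by
    intro k
    fin_cases k
    · exact le_trans (le_max_left _ _) (le_max_left _ _)
    · exact le_trans (le_max_right _ _) (le_max_left _ _)
    · exact le_max_right _ _
  obtain ⟨n, hn, f, hf⟩ := BA.upper N D l l' hl hl' hbound
  have hne : {n | ∃ f : ℕ → Fin 3 → ℕ, BA.IsWalk N n f l l'}.Nonempty := ⟨n, f, hf⟩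
  apply le_antisymm
  · exact le_trans (Nat.sInf_le ⟨f, hf⟩) hn
  · obtain ⟨g, hg⟩ := Nat.sInf_mem hne
    have := BA.lower N _ g l l' hg
    exact max_le (max_le (this 0) (this 1)) (this 2)
end

section
/- Let N be a natural number and let λ = (r,s,t) and λ' = (r',s',t') be locations in Δ_N. Then the number of geodesic paths in Δ_N from λ to λ' is equal to the binomial coefficient C(d_1+d_2, d_1), where d_1 ≤ d_2 ≤ d_3 is an ordering of the three quantities |r−r'|, |s−s'|, |t−t'|. -/
/-- The set of geodesic paths in `Δ_N` from `u` to `v`: sequences of length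
`∂(u,v)` with consecutive entries adjacent, no immediate backtracking,
all entries in `Δ_N`, starting at `u` and ending at `v`. -/
def BA.geodesics (N : ℕ) (u v : Fin 3 → ℕ) :
    Set (Fin (BA.dist N u v + 1) → Fin 3 → ℕ) :=
  {f | f 0 = u ∧ f (Fin.last (BA.dist N u v)) = v ∧ (∀ i, f i ∈ BA.Delta N) ∧
    (∀ i : ℕ, ∀ _ : i + 1 ≤ BA.dist N u v,
      BA.Adj (f ⟨i, by omega⟩) (f ⟨i + 1, by omega⟩)) ∧
    (∀ i : ℕ, ∀ _ : i + 2 ≤ BA.dist N u v, f ⟨i, by omega⟩ ≠ f ⟨i + 2, by omega⟩)}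

namespace BAP
open BA

def G (N n : ℕ) (u v : Fin 3 → ℕ) : Set (Fin (n+1) → Fin 3 → ℕ) :=
  {f | f 0 = u ∧ f (Fin.last n) = v ∧ (∀ i, f i ∈ BA.Delta N) ∧
    (∀ i : ℕ, ∀ _ : i + 1 ≤ n, BA.Adj (f ⟨i, by omega⟩) (f ⟨i + 1, by omega⟩)) ∧
    (∀ i : ℕ, ∀ _ : i + 2 ≤ n, f ⟨i, by omega⟩ ≠ f ⟨i + 2, by omega⟩)}

lemma geodesics_eq (N : ℕ) (u v : Fin 3 → ℕ) :
    BA.geodesics N u v = G N (BA.dist N u v) u v := rfl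

lemma adj_symm {u v : Fin 3 → ℕ} (h : BA.Adj u v) : BA.Adj v u := by
  obtain ⟨i, j, hij, hd⟩ := h
  refine ⟨j, i, hij.symm, fun c => ?_⟩
  have := hd c
  split_ifs at this ⊢ <;> omega

lemma adj_bound {u v : Fin 3 → ℕ} (h : BA.Adj u v) (c : Fin 3) :
    (u c : ℤ) - v c ≤ 1 ∧ (v c : ℤ) - u c ≤ 1 := by
  obtain ⟨i, j, hij, hd⟩ := h
  have := hd c
  split_ifs at this <;> omega

lemma fin3_cases {i j k : Fin 3} (hij : i ≠ j) (hik : i ≠ k) (hjk : j ≠ k) (c : Fin 3) :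
    c = i ∨ c = j ∨ c = k := by
  have h1 := i.isLt; have h2 := j.isLt; have h3 := k.isLt; have h4 := c.isLt
  simp only [Fin.ext_iff, Ne] at *
  omega

lemma sum3 {M : Type*} [AddCommMonoid M] {i j k : Fin 3} (hij : i ≠ j) (hik : i ≠ k)
    (hjk : j ≠ k) (w : Fin 3 → M) : w i + w j + w k = w 0 + w 1 + w 2 := by
  fin_cases i <;> fin_cases j <;> fin_cases k <;> simp_all <;> abel

lemma walk_bound {N n : ℕ} {f : ℕ → Fin 3 → ℕ} {u v : Fin 3 → ℕ}
    (h : BA.IsWalk N n f u v) (c : Fin 3) :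
    (u c : ℤ) - v c ≤ n ∧ (v c : ℤ) - u c ≤ n := by
  obtain ⟨h0, hn, -, hadj⟩ := h
  have key : ∀ m, m ≤ n → ((f 0 c : ℤ) - f m c ≤ m ∧ (f m c : ℤ) - f 0 c ≤ m) := by
    intro m
    induction m with
    | zero => omega
    | succ m ih =>
      intro hm
      have h1 := ih (by omega)
      have h2 := adj_bound (hadj m (by omega)) c
      push_cast at *
      omega
  have := key n le_rfl
  rw [h0, hn] at this
  exact this

lemma dist_symm (N : ℕ) (u v : Fin 3 → ℕ) : BA.dist N u v = BA.dist N v u := by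
  have key : ∀ u v : Fin 3 → ℕ, ∀ n, (∃ f, BA.IsWalk N n f u v) → ∃ g, BA.IsWalk N n g v u := by
    rintro u v n ⟨f, h0, hn, hmem, hadj⟩
    refine ⟨fun m => f (n - m), by simp [hn], by simp [h0], fun m _ => hmem _ (Nat.sub_le n m), ?_⟩
    intro m hm
    have h := hadj (n - m - 1) (by omega)
    rw [show n - m - 1 + 1 = n - m by omega] at h
    show BA.Adj (f (n - m)) (f (n - (m + 1)))
    rw [show n - (m + 1) = n - m - 1 by omega]
    exact adj_symm h
  unfold BA.dist
  congr 1
  ext n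
  exact ⟨key u v n, key v u n⟩


def cnt {D : ℕ} (S : Finset (Fin D)) (m : ℕ) : ℕ := (S.filter (fun t => t.val < m)).card

lemma cnt_zero {D : ℕ} (S : Finset (Fin D)) : cnt S 0 = 0 := by simp [cnt]

lemma cnt_card {D : ℕ} (S : Finset (Fin D)) {m : ℕ} (h : D ≤ m) : cnt S m = S.card := by
  unfold cnt
  rw [Finset.filter_true_of_mem]
  intro t _
  exact lt_of_lt_of_le t.isLt h

lemma cnt_succ {D : ℕ} (S : Finset (Fin D)) {m : ℕ} (h : m < D) :
    cnt S (m + 1) = cnt S m + if (⟨m, h⟩ : Fin D) ∈ S then 1 else 0 := by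
  unfold cnt
  have he : S.filter (fun t => t.val < m + 1)
      = S.filter (fun t => t.val < m) ∪ S.filter (fun t => t = ⟨m, h⟩) := by
    rw [← Finset.filter_or]
    apply Finset.filter_congr
    intro t _
    constructor
    · intro ht
      rcases Nat.lt_succ_iff_lt_or_eq.mp ht with h' | h'
      · exact Or.inl h'
      · exact Or.inr (Fin.ext h')
    · rintro (h' | rfl)
      · omega
      · simp
  rw [he, Finset.card_union_of_disjoint]
  · congr 1
    rw [Finset.filter_eq']
    split_ifs <;> simp
  · rw [Finset.disjoint_left]
    rintro t ht ht'
    simp only [Finset.mem_filter] at ht ht'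
    rcases ht' with ⟨-, rfl⟩
    simp at ht

lemma cnt_le {D : ℕ} (S : Finset (Fin D)) (m : ℕ) : cnt S m ≤ m := by
  have : cnt S m ≤ (Finset.range m).card := by
    apply Finset.card_le_card_of_injOn (fun t => t.val)
    · intro t ht
      simp only [cnt, Finset.mem_coe, Finset.mem_filter] at ht
      simp [ht.2]
    · intro x _ y _ hxy
      exact Fin.ext hxy
  simpa using this

def psi (u : Fin 3 → ℕ) (i j k : Fin 3) {D : ℕ} (S : Finset (Fin D)) :
    Fin (D + 1) → Fin 3 → ℕ :=
  fun m c => if c = i then u i - m.val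
    else if c = j then u j + cnt S m.val
    else u k + (m.val - cnt S m.val)

lemma psi_inj (u : Fin 3 → ℕ) {i j k : Fin 3} (hij : i ≠ j) (D : ℕ) :
    Function.Injective (psi u i j k (D := D)) := by
  intro S T h
  ext t
  have h1 := congrFun (congrFun h ⟨t.val, by omega⟩) j
  have h2 := congrFun (congrFun h ⟨t.val + 1, by omega⟩) j
  simp only [psi, if_neg (Ne.symm hij), if_pos rfl, if_true] at h1 h2
  rw [cnt_succ S t.isLt, cnt_succ T t.isLt] at h2
  simp only [Fin.eta] at h2
  by_cases htS : t ∈ S <;> by_cases htT : t ∈ T <;> simp [htS, htT] at h2 ⊢ <;> omega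


lemma psi_mem (N : ℕ) (u v : Fin 3 → ℕ) {i j k : Fin 3} (hij : i ≠ j) (hik : i ≠ k)
    (hjk : j ≠ k) {a b : ℕ} (hvj : v j = u j + a) (hvk : v k = u k + b)
    (hui : u i = v i + (a + b)) (hu : u ∈ BA.Delta N) (S : Finset (Fin (a + b)))
    (hS : S.card = a) : psi u i j k S ∈ G N (a + b) u v := by
  refine ⟨?_, ?_, ?_, ?_, ?_⟩
  · funext c
    rcases fin3_cases hij hik hjk c with hc | hc | hc <;> rw [hc]
    · simp [psi]
    · simp [psi, Ne.symm hij, cnt_zero]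
    · simp [psi, Ne.symm hik, Ne.symm hjk]
  · funext c
    rcases fin3_cases hij hik hjk c with hc | hc | hc <;> rw [hc]
    · simp [psi, Fin.val_last]
      omega
    · simp [psi, Ne.symm hij, cnt_card S le_rfl, hS, hvj]
    · simp [psi, Ne.symm hik, Ne.symm hjk, cnt_card S le_rfl, hS, hvk]
      try omega
  · intro m
    have h1 : cnt S m.val ≤ m.val := cnt_le S m.val
    have h2 : m.val ≤ a + b := by omega
    have huN : u 0 + u 1 + u 2 = N := hu
    have hs3 := sum3 hij hik hjk u
    have hsum : psi u i j k S m i + psi u i j k S m j + psi u i j k S m k = N := by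
      simp [psi, Ne.symm hij, Ne.symm hik, Ne.symm hjk]
      omega
    have hs4 := sum3 hij hik hjk (psi u i j k S m)
    show psi u i j k S m 0 + psi u i j k S m 1 + psi u i j k S m 2 = N
    omega
  · intro m hm
    have hmlt : m < a + b := by omega
    have hcle := cnt_le S m
    by_cases hmS : (⟨m, hmlt⟩ : Fin (a + b)) ∈ S
    · have hc : cnt S (m + 1) = cnt S m + 1 := by
        rw [cnt_succ S hmlt]; simp [hmS]
      refine ⟨i, j, hij, fun c => ?_⟩
      rcases fin3_cases hij hik hjk c with h' | h' | h' <;> rw [h'] <;>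
        simp [psi, Ne.symm hij, Ne.symm hik, Ne.symm hjk, hij, hik, hjk, hc] <;> omega
    · have hc : cnt S (m + 1) = cnt S m := by
        rw [cnt_succ S hmlt]; simp [hmS]
      refine ⟨i, k, hik, fun c => ?_⟩
      rcases fin3_cases hij hik hjk c with h' | h' | h' <;> rw [h'] <;>
        simp [psi, Ne.symm hij, Ne.symm hik, Ne.symm hjk, hij, hik, hjk, hc] <;> omega
  · intro m hm h
    have hh := congrFun h i
    simp [psi] at hh
    have : m + 2 ≤ u i := by omega
    omega


lemma geodesic_eq_psi (N : ℕ) (u v : Fin 3 → ℕ) {i j k : Fin 3} (hij : i ≠ j)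
    (hik : i ≠ k) (hjk : j ≠ k) {a b : ℕ} (hvj : v j = u j + a) (hvk : v k = u k + b)
    (hui : u i = v i + (a + b)) {f : Fin (a + b + 1) → Fin 3 → ℕ}
    (hf : f ∈ G N (a + b) u v) :
    ∃ S : Finset (Fin (a + b)), S.card = a ∧ f = psi u i j k S := by
  obtain ⟨hf0, hfl, hmem, hadj, -⟩ := hf
  have hD : True := trivial
  set F : ℕ → Fin 3 → ℕ := fun m => f ⟨min m (a+b), by omega⟩ with hFdef
  have hFm : ∀ m, m ≤ (a+b) → ∀ (pf : m < (a+b) + 1), F m = f ⟨m, pf⟩ := by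
    intro m hm pf
    exact congrArg f (Fin.ext (by simp [Nat.min_eq_left hm]))
  have hF0 : F 0 = u := by
    rw [hFm 0 (by omega) (by omega), show (⟨0, by omega⟩ : Fin ((a+b) + 1)) = 0 from
      Fin.ext (by simp)]
    exact hf0
  have hFD : F (a+b) = v := by
    rw [hFm (a+b) le_rfl (by omega)]
    exact hfl
  have hFadj : ∀ m, m < (a+b) → BA.Adj (F m) (F (m + 1)) := by
    intro m hm
    have h := hadj m hm
    rw [hFm m (by omega) (by omega), hFm (m + 1) (by omega) (by omega)]
    exact h
  have hlow : ∀ m, m ≤ (a+b) → (u i : ℤ) - m ≤ F m i := by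
    intro m
    induction m with
    | zero => intro _; rw [hF0]; simp
    | succ m ih =>
      intro hm
      have h1 := ih (by omega)
      have h2 := (adj_bound (hFadj m (by omega)) i).1
      push_cast at *
      omega
  have hupp : ∀ n m, m + n ≤ (a+b) → (F m i : ℤ) ≤ F (m + n) i + n := by
    intro n
    induction n with
    | zero => intro m _; simp
    | succ n ih =>
      intro m hm
      have h1 := ih m (by omega)
      have h2 := (adj_bound (hFadj (m + n) (by omega)) i).1
      have e : m + (n + 1) = m + n + 1 := by omega
      rw [e]
      push_cast at *
      omega
  have heq : ∀ m, m ≤ (a+b) → (F m i : ℤ) = (u i : ℤ) - m := by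
    intro m hm
    have h1 := hlow m hm
    have h2 := hupp ((a+b) - m) m (by omega)
    rw [show m + ((a+b) - m) = (a+b) by omega, hFD] at h2
    omega
  have hstepc : ∀ m, m + 1 ≤ (a+b) →
      (F (m + 1) j = F m j + 1 ∧ F (m + 1) k = F m k) ∨
      (F (m + 1) j = F m j ∧ F (m + 1) k = F m k + 1) := by
    intro m hm
    obtain ⟨p, q, hpq, hd⟩ := hFadj m (by omega)
    have hdi := hd i
    have hdj := hd j
    have hdk := hd k
    have hii : (F m i : ℤ) = F (m + 1) i + 1 := by
      have e1 := heq m (by omega)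
      have e2 := heq (m + 1) hm
      push_cast at *
      omega
    have hp : i = p := by
      by_contra hne
      rw [if_neg hne] at hdi
      split_ifs at hdi <;> omega
    rw [← hp] at hdi hdj hdk
    rcases fin3_cases hij hik hjk q with hc | hc | hc
    · exact absurd hc.symm (by rw [← hp] at hpq; exact hpq)
    · rw [hc] at hdj hdk
      rw [if_neg (Ne.symm hij), if_pos rfl] at hdj
      rw [if_neg (Ne.symm hik), if_neg (Ne.symm hjk)] at hdk
      left
      constructor <;> omega
    · rw [hc] at hdj hdk
      rw [if_neg (Ne.symm hij), if_neg hjk] at hdj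
      rw [if_neg (Ne.symm hik), if_pos rfl] at hdk
      right
      constructor <;> omega
  set S := Finset.univ.filter (fun t : Fin (a+b) => F (t.val + 1) j = F t.val j + 1) with hSdef
  have hcnt : ∀ m, m ≤ (a+b) → F m j = u j + cnt S m ∧ F m k = u k + (m - cnt S m) := by
    intro m
    induction m with
    | zero => intro _; rw [hF0]; simp [cnt_zero]
    | succ m ih =>
      intro hm
      obtain ⟨ih1, ih2⟩ := ih (by omega)
      have hmlt : m < (a+b) := by omega
      have hcle := cnt_le S m
      rcases hstepc m hm with ⟨h1, h2⟩ | ⟨h1, h2⟩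
      · have hmem : (⟨m, hmlt⟩ : Fin (a+b)) ∈ S := by
          rw [hSdef, Finset.mem_filter]
          exact ⟨Finset.mem_univ _, h1⟩
        have hc : cnt S (m + 1) = cnt S m + 1 := by rw [cnt_succ S hmlt, if_pos hmem]
        constructor <;> omega
      · have hmem : (⟨m, hmlt⟩ : Fin (a+b)) ∉ S := by
          rw [hSdef, Finset.mem_filter]
          rintro ⟨-, hbad⟩
          simp only [] at hbad
          omega
        have hc : cnt S (m + 1) = cnt S m := by
          rw [cnt_succ S hmlt, if_neg hmem, add_zero]
        constructor <;> omega
  have hcard : S.card = a := by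
    have h := (hcnt (a+b) le_rfl).1
    rw [hFD, cnt_card S le_rfl] at h
    omega
  have hfeq : f = psi u i j k S := by
    funext m c
    have hm : m.val ≤ (a+b) := by omega
    rw [← hFm m.val hm (by omega)]
    rcases fin3_cases hij hik hjk c with hc | hc | hc <;> rw [hc]
    · have h := heq m.val hm
      simp [psi]
      omega
    · have h := (hcnt m.val hm).1
      simp [psi, Ne.symm hij]
      omega
    · have h := (hcnt m.val hm).2
      simp [psi, Ne.symm hik, Ne.symm hjk]
      omega
  exact ⟨S, hcard, hfeq⟩


lemma main_ncard (N : ℕ) (u v : Fin 3 → ℕ) {i j k : Fin 3} (hij : i ≠ j) (hik : i ≠ k)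
    (hjk : j ≠ k) {a b : ℕ} (hvj : v j = u j + a) (hvk : v k = u k + b)
    (hui : u i = v i + (a + b)) (hu : u ∈ BA.Delta N) :
    (G N (a + b) u v).ncard = (a + b).choose a := by
  have himg : G N (a + b) u v
      = psi u i j k '' {S : Finset (Fin (a + b)) | S.card = a} := by
    ext f
    constructor
    · intro hf
      obtain ⟨S, hS, rfl⟩ := geodesic_eq_psi N u v hij hik hjk hvj hvk hui hf
      exact ⟨S, hS, rfl⟩
    · rintro ⟨S, hS, rfl⟩
      exact psi_mem N u v hij hik hjk hvj hvk hui hu S hS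
  rw [himg, Set.ncard_image_of_injOn ((psi_inj u hij (a + b)).injOn)]
  have hset : {S : Finset (Fin (a + b)) | S.card = a}
      = ↑(Finset.powersetCard a (Finset.univ : Finset (Fin (a + b)))) := by
    ext S
    simp [Finset.mem_powersetCard_univ]
  rw [hset, Set.ncard_coe_finset, Finset.card_powersetCard]
  simp

set_option maxHeartbeats 1000000 in
lemma main_dist (N : ℕ) (u v : Fin 3 → ℕ) {i j k : Fin 3} (hij : i ≠ j) (hik : i ≠ k)
    (hjk : j ≠ k) {a b : ℕ} (hvj : v j = u j + a) (hvk : v k = u k + b)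
    (hui : u i = v i + (a + b)) (hu : u ∈ BA.Delta N) :
    BA.dist N u v = a + b := by
  have hS0 : ∃ S : Finset (Fin (a + b)), S.card = a := by
    refine ⟨Finset.univ.filter (fun t : Fin (a + b) => t.val < a), ?_⟩
    have : (Finset.univ.filter (fun t : Fin (a + b) => t.val < a)).card
        = ((Finset.univ.filter (fun t : Fin (a + b) => t.val < a)).image Fin.val).card := by
      rw [Finset.card_image_of_injective _ Fin.val_injective]
    rw [this, show (Finset.univ.filter (fun t : Fin (a + b) => t.val < a)).image Fin.val
        = Finset.range a from ?_, Finset.card_range]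
    ext n
    simp only [Finset.mem_image, Finset.mem_filter, Finset.mem_univ, true_and,
      Finset.mem_range]
    constructor
    · rintro ⟨t, ht, rfl⟩; exact ht
    · intro hn; exact ⟨⟨n, by omega⟩, hn, rfl⟩
  obtain ⟨S, hS⟩ := hS0
  obtain ⟨g, hgdef⟩ : ∃ g : Fin (a + b + 1) → Fin 3 → ℕ, g = psi u i j k S := ⟨_, rfl⟩
  have hmemG : g ∈ G N (a + b) u v := by
    rw [hgdef]; exact psi_mem N u v hij hik hjk hvj hvk hui hu S hS
  obtain ⟨hg0, hgl, hgmem, hgadj, -⟩ := hmemG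
  have hwalk : BA.IsWalk N (a + b) (fun m => g ⟨min m (a + b), by omega⟩) u v := by
    refine ⟨?_, ?_, ?_, ?_⟩
    · exact (congrArg g
        (show (⟨min 0 (a + b), by omega⟩ : Fin (a + b + 1)) = 0 from
          Fin.ext (by simp))).trans hg0
    · exact (congrArg g
        (show (⟨min (a + b) (a + b), by omega⟩ : Fin (a + b + 1)) = Fin.last (a + b) from
          Fin.ext (by show min (a + b) (a + b) = a + b; omega))).trans hgl
    · intro m _; exact hgmem _
    · intro m hm
      have h := hgadj m hm
      have e1 : (⟨min m (a + b), by omega⟩ : Fin (a + b + 1)) = ⟨m, by omega⟩ :=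
        Fin.ext (by show min m (a + b) = m; omega)
      have e2 : (⟨min (m + 1) (a + b), by omega⟩ : Fin (a + b + 1)) = ⟨m + 1, by omega⟩ :=
        Fin.ext (by show min (m + 1) (a + b) = m + 1; omega)
      show BA.Adj (g ⟨min m (a + b), by omega⟩) (g ⟨min (m + 1) (a + b), by omega⟩)
      simp only [e1, e2]
      exact h
  show sInf {n | ∃ f : ℕ → Fin 3 → ℕ, BA.IsWalk N n f u v} = a + b
  apply le_antisymm
  · exact Nat.sInf_le ⟨_, hwalk⟩
  · have hne : {n | ∃ f : ℕ → Fin 3 → ℕ, BA.IsWalk N n f u v}.Nonempty := ⟨_, _, hwalk⟩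
    obtain ⟨g, hg⟩ := Nat.sInf_mem hne
    have hb := (walk_bound hg i).1
    omega


lemma G_rev_mapsTo (N n : ℕ) (u v : Fin 3 → ℕ) {f : Fin (n + 1) → Fin 3 → ℕ}
    (hf : f ∈ G N n u v) : (fun m => f (Fin.rev m)) ∈ G N n v u := by
  obtain ⟨h0, hl, hmem, hadj, hnb⟩ := hf
  refine ⟨?_, ?_, fun m => hmem _, ?_, ?_⟩
  · show f (Fin.rev 0) = v
    rw [Fin.rev_zero]
    exact hl
  · show f (Fin.last n).rev = u
    rw [Fin.rev_last]
    exact h0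
  · intro m hm
    have h := hadj (n - (m + 1)) (by omega)
    have e1 : Fin.rev (⟨m, by omega⟩ : Fin (n + 1)) = ⟨n - m, by omega⟩ := by
      rw [Fin.rev]
      exact Fin.ext (by show n + 1 - (m + 1) = n - m; omega)
    have e2 : Fin.rev (⟨m + 1, by omega⟩ : Fin (n + 1)) = ⟨n - (m + 1), by omega⟩ := by
      rw [Fin.rev]
      exact Fin.ext (by show n + 1 - (m + 1 + 1) = n - (m + 1); omega)
    have e3 : (⟨n - (m + 1) + 1, by omega⟩ : Fin (n + 1)) = ⟨n - m, by omega⟩ :=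
      Fin.ext (by show n - (m + 1) + 1 = n - m; omega)
    show BA.Adj (f (Fin.rev ⟨m, by omega⟩)) (f (Fin.rev ⟨m + 1, by omega⟩))
    simp only [e1, e2]
    rw [e3] at h
    exact adj_symm h
  · intro m hm hbad
    have h := hnb (n - (m + 2)) (by omega)
    have e1 : Fin.rev (⟨m, by omega⟩ : Fin (n + 1)) = ⟨n - (m + 2) + 2, by omega⟩ := by
      rw [Fin.rev]
      exact Fin.ext (by show n + 1 - (m + 1) = n - (m + 2) + 2; omega)
    have e2 : Fin.rev (⟨m + 2, by omega⟩ : Fin (n + 1)) = ⟨n - (m + 2), by omega⟩ := by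
      rw [Fin.rev]
      exact Fin.ext (by show n + 1 - (m + 2 + 1) = n - (m + 2); omega)
    apply h
    have hbad' : f (Fin.rev ⟨m, by omega⟩) = f (Fin.rev ⟨m + 2, by omega⟩) := hbad
    simp only [e1, e2] at hbad'
    exact hbad'.symm

lemma G_rev (N n : ℕ) (u v : Fin 3 → ℕ) : (G N n u v).ncard = (G N n v u).ncard := by
  have hinj : Function.Injective
      (fun (f : Fin (n + 1) → Fin 3 → ℕ) => (fun m => f (Fin.rev m))) := by
    intro f g h
    funext m
    have := congrFun h (Fin.rev m)
    simpa [Fin.rev_rev] using this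
  have himg : G N n v u
      = (fun (f : Fin (n + 1) → Fin 3 → ℕ) => (fun m => f (Fin.rev m))) '' G N n u v := by
    ext g
    constructor
    · intro hg
      refine ⟨fun m => g (Fin.rev m), G_rev_mapsTo N n v u hg, ?_⟩
      funext m
      simp [Fin.rev_rev]
    · rintro ⟨f, hf, rfl⟩
      exact G_rev_mapsTo N n u v hf
  rw [himg, Set.ncard_image_of_injective _ hinj]


lemma choose_swap (xj xk : ℕ) : (xj + xk).choose xj = (xk + xj).choose xk := by
  have h : (xj + xk).choose xj = (xj + xk).choose xk := by
    rw [← Nat.choose_symm (show xj ≤ xj + xk by omega),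
      show xj + xk - xj = xk by omega]
  rw [h, Nat.add_comm]

lemma assemble (N : ℕ) (l l' : Fin 3 → ℕ) (hl : l ∈ BA.Delta N) (hl' : l' ∈ BA.Delta N)
    {i j k : Fin 3} (hij : i ≠ j) (hik : i ≠ k) (hjk : j ≠ k)
    (hmaxj : ((l j : ℤ) - l' j).natAbs ≤ ((l i : ℤ) - l' i).natAbs)
    (hmaxk : ((l k : ℤ) - l' k).natAbs ≤ ((l i : ℤ) - l' i).natAbs)
    (d₁ d₂ d₃ : ℕ)
    (hperm : ({d₁, d₂, d₃} : Multiset ℕ) =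
      {((l i : ℤ) - l' i).natAbs, ((l j : ℤ) - l' j).natAbs, ((l k : ℤ) - l' k).natAbs})
    (h12 : d₁ ≤ d₂) (h23 : d₂ ≤ d₃) :
    (BA.geodesics N l l').ncard = (d₁ + d₂).choose d₁ := by
  set xi := ((l i : ℤ) - l' i).natAbs with hxi
  set xj := ((l j : ℤ) - l' j).natAbs with hxj
  set xk := ((l k : ℤ) - l' k).natAbs with hxk
  have hlN : l 0 + l 1 + l 2 = N := hl
  have hlN' : l' 0 + l' 1 + l' 2 = N := hl'
  have hsum : ((l 0 : ℤ) - l' 0) + ((l 1 : ℤ) - l' 1) + ((l 2 : ℤ) - l' 2) = 0 := by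
    omega
  have hsum3 : ((l i : ℤ) - l' i) + ((l j : ℤ) - l' j) + ((l k : ℤ) - l' k) = 0 := by
    have hb := sum3 hij hik hjk (fun c => (l c : ℤ) - l' c)
    exact hb.trans hsum
  have hx : xi = xj + xk := by omega
  have hd3mem : d₃ = xi ∨ d₃ = xj ∨ d₃ = xk := by
    have h : d₃ ∈ ({d₁, d₂, d₃} : Multiset ℕ) := by simp
    rw [hperm] at h
    simpa using h
  have hximem : xi = d₁ ∨ xi = d₂ ∨ xi = d₃ := by
    have h : xi ∈ ({xi, xj, xk} : Multiset ℕ) := by simp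
    rw [← hperm] at h
    simpa using h
  have hd3 : d₃ = xi := by omega
  have hpair : ({d₁, d₂} : Multiset ℕ) = {xj, xk} := by
    have h1 : ({d₁, d₂, d₃} : Multiset ℕ) = xi ::ₘ {d₁, d₂} := by
      rw [hd3]
      show d₁ ::ₘ d₂ ::ₘ xi ::ₘ 0 = xi ::ₘ d₁ ::ₘ d₂ ::ₘ 0
      rw [Multiset.cons_swap d₂ xi, Multiset.cons_swap d₁ xi]
    have h2 : (xi ::ₘ {d₁, d₂} : Multiset ℕ) = xi ::ₘ {xj, xk} := by
      rw [← h1, hperm]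
      rfl
    exact (Multiset.cons_inj_right xi).mp h2
  have hpaircase : (d₁ = xj ∧ d₂ = xk) ∨ (d₁ = xk ∧ d₂ = xj) := by
    have h1 : d₁ ∈ ({xj, xk} : Multiset ℕ) := by
      rw [← hpair]; simp
    simp only [Multiset.insert_eq_cons, Multiset.mem_cons, Multiset.mem_singleton] at h1
    rcases h1 with h1 | h1
    · left
      refine ⟨h1, ?_⟩
      have h2 := hpair
      rw [h1] at h2
      have := (Multiset.cons_inj_right xj).mp h2
      simpa using this
    · right
      refine ⟨h1, ?_⟩
      have h2 := hpair
      rw [h1, show ({xj, xk} : Multiset ℕ) = xk ::ₘ {xj} from Multiset.cons_swap xj xk 0] at h2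
      have := (Multiset.cons_inj_right xk).mp h2
      simpa using this
  by_cases hsign : (0 : ℤ) ≤ (l i : ℤ) - l' i
  · have e1 : l' j = l j + xj := by omega
    have e2 : l' k = l k + xk := by omega
    have e3 : l i = l' i + (xj + xk) := by omega
    have hdist := main_dist N l l' hij hik hjk e1 e2 e3 hl
    have hn := main_ncard N l l' hij hik hjk e1 e2 e3 hl
    rw [geodesics_eq, hdist, hn]
    rcases hpaircase with ⟨r1, r2⟩ | ⟨r1, r2⟩
    · rw [r1, r2]
    · rw [r1, r2, ← choose_swap xj xk]
  · have e1 : l j = l' j + xj := by omega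
    have e2 : l k = l' k + xk := by omega
    have e3 : l' i = l i + (xj + xk) := by omega
    have hdist := main_dist N l' l hij hik hjk e1 e2 e3 hl'
    have hn := main_ncard N l' l hij hik hjk e1 e2 e3 hl'
    rw [geodesics_eq, dist_symm N l l', hdist, G_rev, hn]
    rcases hpaircase with ⟨r1, r2⟩ | ⟨r1, r2⟩
    · rw [r1, r2]
    · rw [r1, r2, ← choose_swap xj xk]

end BAP

/-- The number of geodesic paths in `Δ_N` from `λ` to `λ'` equals the binomial
coefficient `C(d₁+d₂, d₁)`, where `d₁ ≤ d₂ ≤ d₃` is an ordering of the three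
quantities `|r-r'|, |s-s'|, |t-t'|`. -/
theorem stmt3 (N : ℕ) (l l' : Fin 3 → ℕ)
    (hl : l ∈ BA.Delta N) (hl' : l' ∈ BA.Delta N)
    (d₁ d₂ d₃ : ℕ)
    (hperm : ({d₁, d₂, d₃} : Multiset ℕ) =
      {((l 0 : ℤ) - (l' 0 : ℤ)).natAbs, ((l 1 : ℤ) - (l' 1 : ℤ)).natAbs,
        ((l 2 : ℤ) - (l' 2 : ℤ)).natAbs})
    (h12 : d₁ ≤ d₂) (h23 : d₂ ≤ d₃) :
    (BA.geodesics N l l').ncard = (d₁ + d₂).choose d₁ := by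
  set y0 := ((l 0 : ℤ) - (l' 0 : ℤ)).natAbs with hy0
  set y1 := ((l 1 : ℤ) - (l' 1 : ℤ)).natAbs with hy1
  set y2 := ((l 2 : ℤ) - (l' 2 : ℤ)).natAbs with hy2
  by_cases hA : y1 ≤ y0 ∧ y2 ≤ y0
  · exact BAP.assemble N l l' hl hl' (by decide) (by decide)
      (by decide : (1 : Fin 3) ≠ 2) hA.1 hA.2 d₁ d₂ d₃ hperm h12 h23
  · by_cases hB : y0 ≤ y1 ∧ y2 ≤ y1
    · refine BAP.assemble N l l' hl hl' (by decide : (1 : Fin 3) ≠ 0) (by decide)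
        (by decide : (0 : Fin 3) ≠ 2) hB.1 hB.2 d₁ d₂ d₃ ?_ h12 h23
      rw [hperm]
      exact Multiset.cons_swap y0 y1 {y2}
    · have hC : y0 ≤ y2 ∧ y1 ≤ y2 := by omega
      refine BAP.assemble N l l' hl hl' (by decide : (2 : Fin 3) ≠ 0) (by decide)
        (by decide : (0 : Fin 3) ≠ 1) hC.1 hC.2 d₁ d₂ d₃ ?_ h12 h23
      rw [hperm]
      show (y0 ::ₘ y1 ::ₘ y2 ::ₘ 0 : Multiset ℕ) = y2 ::ₘ y0 ::ₘ y1 ::ₘ 0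
      rw [Multiset.cons_swap y1 y2, Multiset.cons_swap y0 y2]
end

section
/- Let N be a natural number and let λ, λ' be locations in Δ_N. Then λ, λ' are collinear (i.e., they agree in some coordinate) if and only if there exists a unique geodesic path in Δ_N from λ to λ'. Moreover, if λ, λ' are η-collinear for η ∈ {1,2,3}, then every location on this unique geodesic path has the same η-coordinate as λ. -/
namespace BAP
open BA

def D (u v : Fin 3 → ℕ) : ℕ :=
  ((v 0 : ℤ) - u 0).toNat + ((v 1 : ℤ) - u 1).toNat + ((v 2 : ℤ) - u 2).toNat

lemma fin3_cases_s4 : ∀ k : Fin 3, k = 0 ∨ k = 1 ∨ k = 2 := by decide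

lemma sum_eq {N : ℕ} {u v : Fin 3 → ℕ} (hu : u ∈ Delta N) (hv : v ∈ Delta N) :
    u 0 + u 1 + u 2 = v 0 + v 1 + v 2 := by
  simp only [Delta, Set.mem_setOf_eq] at hu hv; omega

lemma D_eq_zero {u v : Fin 3 → ℕ} (hs : u 0 + u 1 + u 2 = v 0 + v 1 + v 2)
    (hD : D u v = 0) : u = v := by
  simp only [D] at hD
  funext k
  rcases fin3_cases_s4 k with rfl | rfl | rfl <;> omega

lemma adj_destruct {u v : Fin 3 → ℕ} (h : Adj u v) :
    ∃ a b : Fin 3, a ≠ b ∧ (u a : ℤ) - v a = 1 ∧ (u b : ℤ) - v b = -1 ∧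
      ∀ k, k ≠ a → k ≠ b → u k = v k := by
  obtain ⟨i, j, hij, h⟩ := h
  refine ⟨i, j, hij, ?_, ?_, ?_⟩
  · have := h i; simp [hij] at this; omega
  · have := h j; simp [hij.symm] at this; omega
  · intro k hki hkj
    have := h k; simp [hki, hkj] at this; omega

/-- Full coordinate description of adjacency `w → w'` (6 patterns). -/
lemma adj_coords {w w' : Fin 3 → ℕ} (h : Adj w w') :
    ((w 0:ℤ) - w' 0 = 1 ∧ (w 1:ℤ) - w' 1 = -1 ∧ w 2 = w' 2) ∨
    ((w 0:ℤ) - w' 0 = 1 ∧ w 1 = w' 1 ∧ (w 2:ℤ) - w' 2 = -1) ∨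
    ((w 0:ℤ) - w' 0 = -1 ∧ (w 1:ℤ) - w' 1 = 1 ∧ w 2 = w' 2) ∨
    (w 0 = w' 0 ∧ (w 1:ℤ) - w' 1 = 1 ∧ (w 2:ℤ) - w' 2 = -1) ∨
    ((w 0:ℤ) - w' 0 = -1 ∧ w 1 = w' 1 ∧ (w 2:ℤ) - w' 2 = 1) ∨
    (w 0 = w' 0 ∧ (w 1:ℤ) - w' 1 = -1 ∧ (w 2:ℤ) - w' 2 = 1) := by
  obtain ⟨a, b, hab, ha, hb, hk⟩ := adj_destruct h
  rcases fin3_cases_s4 a with rfl | rfl | rfl <;> rcases fin3_cases_s4 b with rfl | rfl | rfl <;>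
    first
    | exact absurd rfl hab
    | (have hc := hk 0 (by decide) (by decide); omega)
    | (have hc := hk 1 (by decide) (by decide); omega)
    | (have hc := hk 2 (by decide) (by decide); omega)

lemma D_triangle (u w v : Fin 3 → ℕ) : D u v ≤ D u w + D w v := by
  simp only [D]; omega

lemma D_adj_left {w w' : Fin 3 → ℕ} (h : Adj w w') (v : Fin 3 → ℕ) :
    D w v ≤ D w' v + 1 := by
  rcases adj_coords h with h | h | h | h | h | h <;> simp only [D] <;> omega

lemma D_adj_right {w w' : Fin 3 → ℕ} (h : Adj w w') (u : Fin 3 → ℕ) :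
    D u w' ≤ D u w + 1 := by
  rcases adj_coords h with h | h | h | h | h | h <;> simp only [D] <;> omega

end BAP
namespace BAP
open BA

lemma walk_lower {N : ℕ} : ∀ (n : ℕ) (f : ℕ → Fin 3 → ℕ) (u v : Fin 3 → ℕ),
    IsWalk N n f u v → D u v ≤ n := by
  intro n
  induction n with
  | zero => intro f u v ⟨h0, hn, _, _⟩
            have : u = v := h0 ▸ hn
            subst this; simp [D]
  | succ m ih =>
      intro f u v ⟨h0, hn, hm, ha⟩
      have hw : IsWalk N m (fun i => f (i + 1)) (f 1) v :=
        ⟨rfl, hn, fun i hi => hm (i+1) (by omega), fun i hi => ha (i+1) (by omega)⟩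
      have h1 := ih _ _ _ hw
      have h2 : D u v ≤ D (f 1) v + 1 := h0 ▸ D_adj_left (ha 0 (by omega)) v
      omega

def step (u : Fin 3 → ℕ) (a b : Fin 3) : Fin 3 → ℕ :=
  fun k => if k = a then u k + 1 else if k = b then u k - 1 else u k

lemma step_adj {u : Fin 3 → ℕ} {a b : Fin 3} (hab : a ≠ b) (hb : 0 < u b) :
    Adj u (step u a b) := by
  refine ⟨b, a, hab.symm, fun k => ?_⟩
  by_cases h1 : k = a
  · subst h1; simp [step, hab, Ne.symm hab]
  · by_cases h2 : k = b
    · subst h2; simp [step, hab, h1]; omega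
    · simp [step, h1, h2]

lemma step_spec {N : ℕ} {u v : Fin 3 → ℕ} {a b : Fin 3} (hab : a ≠ b)
    (ha : u a < v a) (hb : v b < u b) (hu : u ∈ Delta N) (hv : v ∈ Delta N) :
    step u a b ∈ Delta N ∧ D (step u a b) v + 1 = D u v := by
  have hs := sum_eq hu hv
  have hNu : u 0 + u 1 + u 2 = N := hu
  rcases fin3_cases_s4 a with rfl | rfl | rfl <;> rcases fin3_cases_s4 b with rfl | rfl | rfl <;>
    first
    | exact absurd rfl hab
    | (constructor
       · show step u _ _ 0 + step u _ _ 1 + step u _ _ 2 = N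
         simp only [step, Fin.reduceEq, reduceIte]
         omega
       · simp only [D, step, Fin.reduceEq, reduceIte]
         omega)

end BAP
namespace BAP
open BA

lemma exists_pair {N : ℕ} {u v : Fin 3 → ℕ} (hu : u ∈ Delta N) (hv : v ∈ Delta N)
    (hD : D u v ≠ 0) : ∃ a b : Fin 3, a ≠ b ∧ u a < v a ∧ v b < u b := by
  have hs := sum_eq hu hv
  simp only [D] at hD
  by_cases h0 : u 0 < v 0
  · by_cases h1 : v 1 < u 1
    · exact ⟨0, 1, by decide, h0, h1⟩
    · exact ⟨0, 2, by decide, h0, by omega⟩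
  · by_cases h1 : u 1 < v 1
    · by_cases h2 : v 2 < u 2
      · exact ⟨1, 2, by decide, h1, h2⟩
      · exact ⟨1, 0, by decide, h1, by omega⟩
    · by_cases h2 : v 0 < u 0
      · exact ⟨2, 0, by decide, by omega, h2⟩
      · exact ⟨2, 1, by decide, by omega, by omega⟩

lemma exists_walk {N : ℕ} : ∀ (n : ℕ) (u v : Fin 3 → ℕ), u ∈ Delta N → v ∈ Delta N →
    D u v = n → ∃ f, IsWalk N n f u v ∧ (∀ i, f i ∈ Delta N) := by
  intro n
  induction n with
  | zero =>
      intro u v hu hv hD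
      have := D_eq_zero (sum_eq hu hv) hD
      subst this
      exact ⟨fun _ => u, ⟨rfl, rfl, fun _ _ => hu, fun i hi => absurd hi (by omega)⟩,
        fun _ => hu⟩
  | succ m ih =>
      intro u v hu hv hD
      obtain ⟨a, b, hab, ha, hb⟩ := exists_pair hu hv (by omega)
      obtain ⟨hmem, hstep⟩ := step_spec hab ha hb hu hv
      obtain ⟨g, ⟨g0, gm, gmem, gadj⟩, gmem'⟩ := ih (step u a b) v hmem hv (by omega)
      refine ⟨fun i => if i = 0 then u else g (i - 1), ⟨by simp, ?_, ?_, ?_⟩, ?_⟩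
      · simp only [Nat.succ_ne_zero, if_neg, Nat.add_sub_cancel]; exact gm
      · intro i _
        by_cases h : i = 0
        · simp [h, hu]
        · simp only [h, if_neg]; exact gmem' _
      · intro i hi
        by_cases h : i = 0
        · subst h
          simpa [g0] using step_adj hab (by omega)
        · have h1 : i - 1 + 1 = i := by omega
          simp only [h, if_neg, Nat.succ_ne_zero]
          have := gadj (i - 1) (by omega)
          rw [h1] at this
          simpa using this
      · intro i
        by_cases h : i = 0
        · simp [h, hu]
        · simp only [h, if_neg]; exact gmem' _

lemma dist_eq {N : ℕ} {u v : Fin 3 → ℕ} (hu : u ∈ Delta N) (hv : v ∈ Delta N) :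
    dist N u v = D u v := by
  have hne : {n | ∃ f : ℕ → Fin 3 → ℕ, IsWalk N n f u v}.Nonempty := by
    obtain ⟨f, hf, -⟩ := exists_walk (D u v) u v hu hv rfl
    exact ⟨D u v, f, hf⟩
  apply le_antisymm
  · obtain ⟨f, hf, -⟩ := exists_walk (D u v) u v hu hv rfl
    exact Nat.sInf_le ⟨f, hf⟩
  · obtain ⟨f, hf⟩ := Nat.sInf_mem hne
    exact walk_lower _ f u v hf

lemma walk_D {N n : ℕ} {F : ℕ → Fin 3 → ℕ} {u v : Fin 3 → ℕ}
    (hw : IsWalk N n F u v) (hn : n = D u v) : ∀ i ≤ n, D (F i) v = n - i := by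
  obtain ⟨h0, hne, hmem, hadj⟩ := hw
  have prefix_le : ∀ i ≤ n, D u (F i) ≤ i := by
    intro i
    induction i with
    | zero => intro _; simp [h0, D]
    | succ m ih =>
        intro hm
        have h1 := ih (by omega)
        have h2 := D_adj_right (hadj m (by omega)) u
        omega
  have suffix_le : ∀ j, j ≤ n → D (F (n - j)) v ≤ j := by
    intro j
    induction j with
    | zero => intro _; simp [hne, D]
    | succ m ih =>
        intro hm
        by_cases hc : m + 1 ≤ n - 1 + 1 ∧ n ≥ m + 1
        · have e : n - m = (n - (m + 1)) + 1 := by omega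
          have h2 := D_adj_left (hadj (n - (m+1)) (by omega)) v
          rw [← e] at h2
          have h1 := ih (by omega)
          omega
        · omega
  intro i hi
  have t := D_triangle u (F i) v
  have p := prefix_le i hi
  have s := suffix_le (n - i) (by omega)
  have e : n - (n - i) = i := by omega
  rw [e] at s
  omega

end BAP
namespace BAP
open BA

lemma fcongr {m : ℕ} (f : Fin m → Fin 3 → ℕ) {i j : Fin m} (h : i.val = j.val) :
    f i = f j := congrArg f (Fin.ext h)

lemma geo_walk {N : ℕ} {u v : Fin 3 → ℕ} (f : Fin (dist N u v + 1) → Fin 3 → ℕ)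
    (hf : f ∈ geodesics N u v) :
    IsWalk N (dist N u v) (fun i => f ⟨min i (dist N u v), by omega⟩) u v := by
  obtain ⟨h0, hlast, hmem, hadj, hnb⟩ := hf
  refine ⟨?_, ?_, fun i _ => hmem _, ?_⟩
  · exact (fcongr f (by simp)).trans h0
  · exact (fcongr f (by simp [Fin.last])).trans hlast
  · intro i hi
    have e1 : f ⟨min i (dist N u v), by omega⟩ = f ⟨i, by omega⟩ :=
      fcongr f (by simp; omega)
    have e2 : f ⟨min (i+1) (dist N u v), by omega⟩ = f ⟨i+1, by omega⟩ :=
      fcongr f (by simp; omega)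
    show Adj (f ⟨min i (dist N u v), by omega⟩) (f ⟨min (i+1) (dist N u v), by omega⟩)
    rw [e1, e2]
    exact hadj i (by omega)

lemma geo_D {N : ℕ} {u v : Fin 3 → ℕ} (hu : u ∈ Delta N) (hv : v ∈ Delta N)
    (f : Fin (dist N u v + 1) → Fin 3 → ℕ) (hf : f ∈ geodesics N u v) :
    ∀ i : ℕ, ∀ h : i ≤ dist N u v, D (f ⟨i, by omega⟩) v = dist N u v - i := by
  intro i hi
  have hw := geo_walk f hf
  have hD := walk_D hw (dist_eq hu hv) i hi
  have e : f ⟨min i (dist N u v), by omega⟩ = f ⟨i, by omega⟩ := fcongr f (by simp [hi])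
  rw [← e]
  exact hD

lemma step_pos {v w w' : Fin 3 → ℕ} (hadj : Adj w w') (hdrop : D w v = D w' v + 1) :
    ∃ a b : Fin 3, a ≠ b ∧ w' = step w a b ∧ w a < v a ∧ v b < w b := by
  obtain ⟨i, j, hij, ha, hb, hk⟩ := adj_destruct hadj
  refine ⟨j, i, hij.symm, ?_, ?_⟩
  · funext k
    by_cases hk1 : k = j
    · subst hk1; simp [step]; omega
    · by_cases hk2 : k = i
      · subst hk2; simp [step, hij, hk1]; omega
      · simp [step, hk1, hk2]; exact (hk k hk2 hk1).symm
  · rcases fin3_cases_s4 i with rfl | rfl | rfl <;> rcases fin3_cases_s4 j with rfl | rfl | rfl <;>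
      first
      | exact absurd rfl hij
      | (first
         | (have hc := hk 0 (by decide) (by decide); simp only [D] at hdrop; omega)
         | (have hc := hk 1 (by decide) (by decide); simp only [D] at hdrop; omega)
         | (have hc := hk 2 (by decide) (by decide); simp only [D] at hdrop; omega))

end BAP
namespace BAP
open BA

lemma geo_coord {N : ℕ} {u v : Fin 3 → ℕ} (hu : u ∈ Delta N) (hv : v ∈ Delta N)
    {η : Fin 3} (hη : u η = v η) (f : Fin (dist N u v + 1) → Fin 3 → ℕ)
    (hf : f ∈ geodesics N u v) :
    ∀ i : ℕ, ∀ h : i ≤ dist N u v, f ⟨i, by omega⟩ η = u η := by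
  have hD := geo_D hu hv f hf
  obtain ⟨h0, hlast, hmem, hadj, hnb⟩ := hf
  intro i
  induction i with
  | zero => intro _; rw [show (⟨0, by omega⟩ : Fin (dist N u v + 1)) = 0 from Fin.ext (by simp), h0]
  | succ m ih =>
      intro hm
      have ihm := ih (by omega)
      have d1 := hD m (by omega)
      have d2 := hD (m+1) (by omega)
      have hdrop : D (f ⟨m, by omega⟩) v = D (f ⟨m+1, by omega⟩) v + 1 := by omega
      obtain ⟨a, b, hab, heq, ha, hb⟩ := step_pos (hadj m (by omega)) hdrop
      have haη : a ≠ η := by intro h; subst h; rw [ihm, hη] at ha; omega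
      have hbη : b ≠ η := by intro h; subst h; rw [ihm, hη] at hb; omega
      rw [heq]
      simp only [step, if_neg (Ne.symm haη), if_neg (Ne.symm hbη)]
      exact ihm

lemma fin3_eq : ∀ x y z t : Fin 3, x ≠ z → x ≠ t → y ≠ z → y ≠ t → z ≠ t → x = y := by decide

lemma succ_unique {v w w1 w2 : Fin 3 → ℕ} {η : Fin 3} (hη : w η = v η)
    (h1 : Adj w w1) (h2 : Adj w w2) (d1 : D w v = D w1 v + 1) (d2 : D w v = D w2 v + 1) :
    w1 = w2 := by
  obtain ⟨a, b, hab, e1, ha, hb⟩ := step_pos h1 d1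
  obtain ⟨a', b', hab', e2, ha', hb'⟩ := step_pos h2 d2
  have haη : a ≠ η := by intro h; subst h; omega
  have hbη : b ≠ η := by intro h; subst h; omega
  have haη' : a' ≠ η := by intro h; subst h; omega
  have hbη' : b' ≠ η := by intro h; subst h; omega
  have haa : a = a' := by
    by_contra hne
    have : b = a' := fin3_eq b a' a η hab.symm hbη (Ne.symm hne) haη' haη
    subst this; omega
  subst haa
  have hbb : b = b' := fin3_eq b b' a η hab.symm hbη hab'.symm hbη' haη
  subst hbb
  rw [e1, e2]

lemma walk_geo {N : ℕ} {u v : Fin 3 → ℕ} {F : ℕ → Fin 3 → ℕ}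
    (hw : IsWalk N (dist N u v) F u v) (hD : dist N u v = D u v) :
    (fun i : Fin (dist N u v + 1) => F i.val) ∈ geodesics N u v := by
  obtain ⟨h0, hn, hmem, hadj⟩ := hw
  have hDi := walk_D ⟨h0, hn, hmem, hadj⟩ hD
  refine ⟨by simpa using h0, by simpa [Fin.last] using hn, fun i => hmem i.val (by omega),
    fun i hi => hadj i (by omega), fun i hi => ?_⟩
  intro hc
  have e1 := hDi i (by omega)
  have e2 := hDi (i+2) (by omega)
  simp only at hc
  rw [hc] at e1
  omega

lemma exists_geo {N : ℕ} {u v : Fin 3 → ℕ} (hu : u ∈ Delta N) (hv : v ∈ Delta N) :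
    ∃ g, g ∈ geodesics N u v := by
  obtain ⟨F, hF, -⟩ := exists_walk (D u v) u v hu hv rfl
  rw [← dist_eq hu hv] at hF
  exact ⟨_, walk_geo hF (dist_eq hu hv)⟩

set_option maxHeartbeats 1000000 in
lemma geo_unique {N : ℕ} {u v : Fin 3 → ℕ} (hu : u ∈ Delta N) (hv : v ∈ Delta N)
    {η : Fin 3} (hη : u η = v η) (f g : Fin (dist N u v + 1) → Fin 3 → ℕ)
    (hf : f ∈ geodesics N u v) (hg : g ∈ geodesics N u v) : f = g := by
  obtain ⟨f0, flast, fmem, fadj, fnb⟩ := id hf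
  obtain ⟨g0, glast, gmem, gadj, gnb⟩ := id hg
  have key : ∀ m : ℕ, ∀ hm : m ≤ dist N u v, f ⟨m, by omega⟩ = g ⟨m, by omega⟩ := by
    intro m
    induction m with
    | zero => intro _
              have e1 : f ⟨0, by omega⟩ = f 0 := fcongr f (by simp)
              have e2 : g ⟨0, by omega⟩ = g 0 := fcongr g (by simp)
              rw [e1, e2, f0, g0]
    | succ m ih =>
        intro hm
        have ihm := ih (by omega)
        have df1 := geo_D hu hv f hf m (by omega)
        have df2 := geo_D hu hv f hf (m+1) (by omega)
        have dg2 := geo_D hu hv g hg (m+1) (by omega)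
        have hcη : f ⟨m, by omega⟩ η = v η := by
          rw [geo_coord hu hv hη f hf m (by omega)]; exact hη
        have adjf := fadj m (by omega)
        have adjg := gadj m (by omega)
        have adjg' : Adj (f ⟨m, by omega⟩) (g ⟨m+1, by omega⟩) := by rw [ihm]; exact adjg
        exact succ_unique hcη adjf adjg' (by omega) (by omega)
  funext i
  have := key i.val (by omega)
  have ef : f ⟨i.val, by omega⟩ = f i := fcongr f rfl
  have eg : g ⟨i.val, by omega⟩ = g i := fcongr g rfl
  rw [← ef, ← eg, this]

end BAP
namespace BAP
open BA

lemma walk_from_pair {N : ℕ} {u v : Fin 3 → ℕ} {a b : Fin 3}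
    (hu : u ∈ Delta N) (hv : v ∈ Delta N) (hab : a ≠ b)
    (ha : u a < v a) (hb : v b < u b) :
    ∃ F, IsWalk N (D u v) F u v ∧ F 1 = step u a b := by
  obtain ⟨hmem, hstep⟩ := step_spec hab ha hb hu hv
  obtain ⟨g, ⟨g0, gm, gmem, gadj⟩, gmem'⟩ :=
    exists_walk (D (step u a b) v) (step u a b) v hmem hv rfl
  refine ⟨fun i => if i = 0 then u else g (i - 1), ⟨by simp, ?_, ?_, ?_⟩, by simp [g0]⟩
  · have hne : D u v ≠ 0 := by omega
    show (if D u v = 0 then u else g (D u v - 1)) = v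
    rw [if_neg hne]
    have e : D u v - 1 = D (step u a b) v := by omega
    rw [e, gm]
  · intro i _
    by_cases h : i = 0
    · simp [h, hu]
    · simp only [h, if_neg]; exact gmem' _
  · intro i hi
    by_cases h : i = 0
    · subst h
      simpa [g0] using step_adj hab (by omega)
    · have h1 : i - 1 + 1 = i := by omega
      simp only [h, if_neg, Nat.succ_ne_zero]
      have := gadj (i - 1) (by omega)
      rw [h1] at this
      simpa using this

lemma two_pairs {u v : Fin 3 → ℕ} (hs : u 0 + u 1 + u 2 = v 0 + v 1 + v 2)
    (h0 : u 0 ≠ v 0) (h1 : u 1 ≠ v 1) (h2 : u 2 ≠ v 2) :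
    ∃ a b a' b' : Fin 3, a ≠ b ∧ a' ≠ b' ∧ u a < v a ∧ v b < u b ∧
      u a' < v a' ∧ v b' < u b' ∧ ¬(a = a' ∧ b = b') := by
  rcases lt_or_gt_of_ne h0 with s0 | s0 <;> rcases lt_or_gt_of_ne h1 with s1 | s1 <;>
    rcases lt_or_gt_of_ne h2 with s2 | s2
  · omega
  · exact ⟨0, 2, 1, 2, by decide, by decide, s0, s2, s1, s2, by decide⟩
  · exact ⟨0, 1, 2, 1, by decide, by decide, s0, s1, s2, s1, by decide⟩
  · exact ⟨0, 1, 0, 2, by decide, by decide, s0, s1, s0, s2, by decide⟩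
  · exact ⟨1, 0, 2, 0, by decide, by decide, s1, s0, s2, s0, by decide⟩
  · exact ⟨1, 0, 1, 2, by decide, by decide, s1, s0, s1, s2, by decide⟩
  · exact ⟨2, 0, 2, 1, by decide, by decide, s2, s0, s2, s1, by decide⟩
  · omega

lemma steps_ne {u : Fin 3 → ℕ} {a b a' b' : Fin 3} (hab : a ≠ b) (hab' : a' ≠ b')
    (hb : 0 < u b) (hne : ¬(a = a' ∧ b = b')) : step u a b ≠ step u a' b' := by
  intro h
  by_cases haa : a = a'
  · subst haa
    have hbb : b ≠ b' := fun e => hne ⟨rfl, e⟩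
    have h1 : step u a b b = u b - 1 := by simp [step, Ne.symm hab]
    have h2 : step u a b' b = u b := by simp [step, Ne.symm hab, hbb]
    rw [h] at h1
    omega
  · have h1 : step u a b a = u a + 1 := by simp [step]
    have h2 : step u a' b' a ≤ u a := by
      simp only [step, if_neg haa]
      split_ifs <;> omega
    rw [h] at h1
    omega

end BAP


/-- Locations `λ, λ'` of `Δ_N` are collinear (agree in some coordinate) iff
there is a unique geodesic path in `Δ_N` from `λ` to `λ'`; moreover if they are
`η`-collinear then every location on a geodesic path from `λ` to `λ'` has the
same `η`-coordinate as `λ`. -/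
theorem stmt4 (N : ℕ) (l l' : Fin 3 → ℕ)
    (hl : l ∈ BA.Delta N) (hl' : l' ∈ BA.Delta N) :
    ((∃ η : Fin 3, l η = l' η) ↔ ∃! f, f ∈ BA.geodesics N l l') ∧
      (∀ η : Fin 3, l η = l' η →
        ∀ f ∈ BA.geodesics N l l', ∀ i, f i η = l η) := by
  constructor
  · constructor
    · rintro ⟨η, hη⟩
      obtain ⟨g, hg⟩ := BAP.exists_geo hl hl'
      exact ⟨g, hg, fun g' hg' => BAP.geo_unique hl hl' hη g' g hg' hg⟩
    · rintro ⟨f, hf, huniq⟩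
      by_contra hcol
      push_neg at hcol
      have hs := BAP.sum_eq hl hl'
      obtain ⟨a, b, a', b', hab, hab', ha, hb, ha', hb', hne⟩ :=
        BAP.two_pairs hs (hcol 0) (hcol 1) (hcol 2)
      obtain ⟨F1, hF1, e1⟩ := BAP.walk_from_pair hl hl' hab ha hb
      obtain ⟨F2, hF2, e2⟩ := BAP.walk_from_pair hl hl' hab' ha' hb'
      have hd := BAP.dist_eq hl hl'
      rw [← hd] at hF1 hF2
      have hg1 := BAP.walk_geo hF1 hd
      have hg2 := BAP.walk_geo hF2 hd
      have hD0 : BAP.D l l' ≠ 0 := fun h => hcol 0 (by rw [BAP.D_eq_zero hs h])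
      have h1 : 1 ≤ BA.dist N l l' := by omega
      have key : (fun i : Fin (BA.dist N l l' + 1) => F1 i.val) ⟨1, by omega⟩ ≠
          (fun i : Fin (BA.dist N l l' + 1) => F2 i.val) ⟨1, by omega⟩ := by
        simp only
        rw [e1, e2]
        exact BAP.steps_ne hab hab' (by omega) hne
      have q1 := huniq _ hg1
      have q2 := huniq _ hg2
      exact key (congrFun (q1.trans q2.symm) _)
  · intro η hη f hf i
    have h := BAP.geo_coord hl hl' hη f hf i.val (by omega)
    have e : f ⟨i.val, by omega⟩ = f i := BAP.fcongr f rfl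
    rw [e] at h
    exact h
end

section
/- Let N ≥ 1 be an integer. Every 3-clique in Δ_N (i.e., every set of three mutually adjacent locations) is either a black 3-clique or a white 3-clique, and not both. Moreover, the map sending (r,s,t) ∈ Δ_{N−1} to the set {(r+1,s,t), (r,s+1,t), (r,s,t+1)} is a bijection from Δ_{N−1} onto the set of black 3-cliques in Δ_N, and (when N ≥ 2) the map sending (r,s,t) ∈ Δ_{N−2} to the set {(r,s+1,t+1), (r+1,s,t+1), (r+1,s+1,t)} is a bijection from Δ_{N−2} onto the set of white 3-cliques in Δ_N. -/
/-- The black 3-clique attached to `(r,s,t)`. -/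
def BA.blackSet (r s t : ℕ) : Set (Fin 3 → ℕ) :=
  {![r + 1, s, t], ![r, s + 1, t], ![r, s, t + 1]}

/-- The white 3-clique attached to `(r,s,t)`. -/
def BA.whiteSet (r s t : ℕ) : Set (Fin 3 → ℕ) :=
  {![r, s + 1, t + 1], ![r + 1, s, t + 1], ![r + 1, s + 1, t]}

/-- `S` is a black 3-clique in `Δ_N`. -/
def BA.IsBlack (N : ℕ) (S : Set (Fin 3 → ℕ)) : Prop :=
  ∃ r s t : ℕ, r + s + t + 1 = N ∧ S = BA.blackSet r s t

/-- `S` is a white 3-clique in `Δ_N`. -/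
def BA.IsWhite (N : ℕ) (S : Set (Fin 3 → ℕ)) : Prop :=
  ∃ r s t : ℕ, r + s + t + 2 = N ∧ S = BA.whiteSet r s t

/-- `S` is a 3-clique in `Δ_N`: a set of three mutually adjacent locations. -/
def BA.IsClique3 (N : ℕ) (S : Set (Fin 3 → ℕ)) : Prop :=
  S ⊆ BA.Delta N ∧ S.ncard = 3 ∧ ∀ x ∈ S, ∀ y ∈ S, x ≠ y → BA.Adj x y

namespace BAProof

lemma forall_fin3 {P : Fin 3 → Prop} : (∀ k, P k) ↔ P 0 ∧ P 1 ∧ P 2 :=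
  ⟨fun h => ⟨h 0, h 1, h 2⟩, fun ⟨a,b,c⟩ k => by fin_cases k <;> assumption⟩

lemma adj_bounds (u v : Fin 3 → ℕ) (h : BA.Adj u v) :
    (u 0 ≤ v 0 + 1 ∧ v 0 ≤ u 0 + 1) ∧ (u 1 ≤ v 1 + 1 ∧ v 1 ≤ u 1 + 1) ∧
    (u 2 ≤ v 2 + 1 ∧ v 2 ≤ u 2 + 1) ∧ u 0 + u 1 + u 2 = v 0 + v 1 + v 2 ∧
    ¬(u 0 = v 0 ∧ u 1 = v 1 ∧ u 2 = v 2) := by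
  obtain ⟨i, j, hij, h⟩ := h
  have h0 := h 0; have h1 := h 1; have h2 := h 2
  fin_cases i <;> fin_cases j <;> simp at h0 h1 h2 hij ⊢ <;> omega

lemma dich3 (a b c : ℕ) (h1 : a ≤ b+1) (h2 : b ≤ a+1) (h3 : a ≤ c+1) (h4 : c ≤ a+1)
    (h5 : b ≤ c+1) (h6 : c ≤ b+1) :
    ∃ m, (a = m ∨ a = m+1) ∧ (b = m ∨ b = m+1) ∧ (c = m ∨ c = m+1) :=
  ⟨min a (min b c), by omega⟩

lemma range3 (a b c m0 m1 m2 N : ℕ) (h0 : a = m0 ∨ a = m0+1) (h1 : b = m1 ∨ b = m1+1)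
    (h2 : c = m2 ∨ c = m2+1) (hs : a + b + c = N) :
    m0 + m1 + m2 ≤ N ∧ N ≤ m0 + m1 + m2 + 3 := by omega

lemma four (w N : ℕ) (hl : w ≤ N) (hu : N ≤ w + 3) :
    N = w ∨ N = w + 1 ∨ N = w + 2 ∨ N = w + 3 := by omega

lemma allmin (a b c m0 m1 m2 : ℕ) (h0 : a = m0 ∨ a = m0+1) (h1 : b = m1 ∨ b = m1+1)
    (h2 : c = m2 ∨ c = m2+1) (hs : a + b + c = m0 + m1 + m2) :
    a = m0 ∧ b = m1 ∧ c = m2 := by omega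

lemma allmax (a b c m0 m1 m2 : ℕ) (h0 : a = m0 ∨ a = m0+1) (h1 : b = m1 ∨ b = m1+1)
    (h2 : c = m2 ∨ c = m2+1) (hs : a + b + c = m0 + m1 + m2 + 3) :
    a = m0+1 ∧ b = m1+1 ∧ c = m2+1 := by omega

lemma weightlem (x0 x1 x2 y0 y1 y2 m0 m1 m2 N : ℕ)
    (hx0 : x0 = m0 ∨ x0 = m0+1) (hy0 : y0 = m0 ∨ y0 = m0+1)
    (hx1 : x1 = m1 ∨ x1 = m1+1) (hy1 : y1 = m1 ∨ y1 = m1+1)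
    (hx2 : x2 = m2 ∨ x2 = m2+1) (hy2 : y2 = m2 ∨ y2 = m2+1)
    (s1 : x0 + x1 + x2 = N) (s2 : y0 + y1 + y2 = N)
    (d1 : ¬(x0 = y0 ∧ x1 = y1 ∧ x2 = y2)) :
    m0 + m1 + m2 + 1 = N ∨ m0 + m1 + m2 + 2 = N := by
  obtain ⟨hl, hu⟩ := range3 x0 x1 x2 m0 m1 m2 N hx0 hx1 hx2 s1
  rcases four (m0 + m1 + m2) N hl hu with hc | hc | hc | hc
  · exfalso
    obtain ⟨e1, e2, e3⟩ := allmin x0 x1 x2 m0 m1 m2 hx0 hx1 hx2 (s1.trans hc)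
    obtain ⟨f1, f2, f3⟩ := allmin y0 y1 y2 m0 m1 m2 hy0 hy1 hy2 (s2.trans hc)
    exact d1 ⟨e1.trans f1.symm, e2.trans f2.symm, e3.trans f3.symm⟩
  · exact Or.inl hc.symm
  · exact Or.inr hc.symm
  · exfalso
    obtain ⟨e1, e2, e3⟩ := allmax x0 x1 x2 m0 m1 m2 hx0 hx1 hx2 (s1.trans hc)
    obtain ⟨f1, f2, f3⟩ := allmax y0 y1 y2 m0 m1 m2 hy0 hy1 hy2 (s2.trans hc)
    exact d1 ⟨e1.trans f1.symm, e2.trans f2.symm, e3.trans f3.symm⟩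

lemma ptlemB (a b c m0 m1 m2 N : ℕ) (h0 : a = m0 ∨ a = m0+1) (h1 : b = m1 ∨ b = m1+1)
    (h2 : c = m2 ∨ c = m2+1) (hs : a + b + c = N) (hw : m0+m1+m2+1 = N) :
    (a = m0+1 ∧ b = m1 ∧ c = m2) ∨ (a = m0 ∧ b = m1+1 ∧ c = m2) ∨
    (a = m0 ∧ b = m1 ∧ c = m2+1) := by omega

lemma ptlemW (a b c m0 m1 m2 N : ℕ) (h0 : a = m0 ∨ a = m0+1) (h1 : b = m1 ∨ b = m1+1)
    (h2 : c = m2 ∨ c = m2+1) (hs : a + b + c = N) (hw : m0+m1+m2+2 = N) :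
    (a = m0 ∧ b = m1+1 ∧ c = m2+1) ∨ (a = m0+1 ∧ b = m1 ∧ c = m2+1) ∨
    (a = m0+1 ∧ b = m1+1 ∧ c = m2) := by omega

lemma same_pat {x y : Fin 3 → ℕ} {a b c : ℕ} {C : Prop}
    (hx : x 0 = a ∧ x 1 = b ∧ x 2 = c) (hy : y 0 = a ∧ y 1 = b ∧ y 2 = c)
    (d : ¬(x 0 = y 0 ∧ x 1 = y 1 ∧ x 2 = y 2)) : C :=
  absurd ⟨hx.1.trans hy.1.symm, hx.2.1.trans hy.2.1.symm, hx.2.2.trans hy.2.2.symm⟩ d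

lemma perm_bac {α : Type*} (a b c : α) : ({a,b,c} : Set α) = {b,a,c} := by
  ext v; simp [Set.mem_insert_iff]; tauto
lemma perm_acb {α : Type*} (a b c : α) : ({a,b,c} : Set α) = {a,c,b} := by
  ext v; simp [Set.mem_insert_iff]; tauto
lemma perm_bca {α : Type*} (a b c : α) : ({a,b,c} : Set α) = {b,c,a} := by
  ext v; simp [Set.mem_insert_iff]; tauto
lemma perm_cab {α : Type*} (a b c : α) : ({a,b,c} : Set α) = {c,a,b} := by
  ext v; simp [Set.mem_insert_iff]; tauto
lemma perm_cba {α : Type*} (a b c : α) : ({a,b,c} : Set α) = {c,b,a} := by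
  ext v; simp [Set.mem_insert_iff]; tauto

lemma vec3_eq {v : Fin 3 → ℕ} {a b c : ℕ} (h0 : v 0 = a) (h1 : v 1 = b) (h2 : v 2 = c) :
    v = ![a, b, c] := by
  funext k; fin_cases k <;> simpa

lemma blackset_eq (x y z : Fin 3 → ℕ) (m0 m1 m2 : ℕ)
    (hx : x 0 = m0+1 ∧ x 1 = m1 ∧ x 2 = m2)
    (hy : y 0 = m0 ∧ y 1 = m1+1 ∧ y 2 = m2)
    (hz : z 0 = m0 ∧ z 1 = m1 ∧ z 2 = m2+1) :
    ({x, y, z} : Set (Fin 3 → ℕ)) = BA.blackSet m0 m1 m2 := by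
  rw [vec3_eq hx.1 hx.2.1 hx.2.2, vec3_eq hy.1 hy.2.1 hy.2.2, vec3_eq hz.1 hz.2.1 hz.2.2]
  rfl

lemma whiteset_eq (x y z : Fin 3 → ℕ) (m0 m1 m2 : ℕ)
    (hx : x 0 = m0 ∧ x 1 = m1+1 ∧ x 2 = m2+1)
    (hy : y 0 = m0+1 ∧ y 1 = m1 ∧ y 2 = m2+1)
    (hz : z 0 = m0+1 ∧ z 1 = m1+1 ∧ z 2 = m2) :
    ({x, y, z} : Set (Fin 3 → ℕ)) = BA.whiteSet m0 m1 m2 := by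
  rw [vec3_eq hx.1 hx.2.1 hx.2.2, vec3_eq hy.1 hy.2.1 hy.2.2, vec3_eq hz.1 hz.2.1 hz.2.2]
  rfl

lemma classify (N : ℕ) (x y z : Fin 3 → ℕ)
    (axy : BA.Adj x y) (axz : BA.Adj x z) (ayz : BA.Adj y z)
    (s1 : x 0 + x 1 + x 2 = N) (s2 : y 0 + y 1 + y 2 = N) (s3 : z 0 + z 1 + z 2 = N) :
    BA.IsBlack N {x, y, z} ∨ BA.IsWhite N {x, y, z} := by
  obtain ⟨b1, b2, b3, _, d1⟩ := adj_bounds x y axy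
  obtain ⟨b4, b5, b6, _, d2⟩ := adj_bounds x z axz
  obtain ⟨b7, b8, b9, _, d3⟩ := adj_bounds y z ayz
  obtain ⟨m0, hx0, hy0, hz0⟩ :=
    dich3 (x 0) (y 0) (z 0) b1.1 b1.2 b4.1 b4.2 b7.1 b7.2
  obtain ⟨m1, hx1, hy1, hz1⟩ :=
    dich3 (x 1) (y 1) (z 1) b2.1 b2.2 b5.1 b5.2 b8.1 b8.2
  obtain ⟨m2, hx2, hy2, hz2⟩ :=
    dich3 (x 2) (y 2) (z 2) b3.1 b3.2 b6.1 b6.2 b9.1 b9.2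
  clear b1 b2 b3 b4 b5 b6 b7 b8 b9 axy axz ayz
  rcases weightlem (x 0) (x 1) (x 2) (y 0) (y 1) (y 2) m0 m1 m2 N
      hx0 hy0 hx1 hy1 hx2 hy2 s1 s2 d1 with hw | hw
  · have hx := ptlemB (x 0) (x 1) (x 2) m0 m1 m2 N hx0 hx1 hx2 s1 hw
    have hy := ptlemB (y 0) (y 1) (y 2) m0 m1 m2 N hy0 hy1 hy2 s2 hw
    have hz := ptlemB (z 0) (z 1) (z 2) m0 m1 m2 N hz0 hz1 hz2 s3 hw
    clear hx0 hx1 hx2 hy0 hy1 hy2 hz0 hz1 hz2 s1 s2 s3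
    rcases hx with hx|hx|hx <;> rcases hy with hy|hy|hy <;> rcases hz with hz|hz|hz <;>
      first
      | exact same_pat hx hy d1
      | exact same_pat hx hz d2
      | exact same_pat hy hz d3
      | exact Or.inl ⟨m0, m1, m2, hw, blackset_eq x y z m0 m1 m2 hx hy hz⟩
      | exact Or.inl ⟨m0, m1, m2, hw, (perm_acb x y z).trans (blackset_eq x z y m0 m1 m2 hx hz hy)⟩
      | exact Or.inl ⟨m0, m1, m2, hw, (perm_bac x y z).trans (blackset_eq y x z m0 m1 m2 hy hx hz)⟩
      | exact Or.inl ⟨m0, m1, m2, hw, (perm_bca x y z).trans (blackset_eq y z x m0 m1 m2 hy hz hx)⟩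
      | exact Or.inl ⟨m0, m1, m2, hw, (perm_cab x y z).trans (blackset_eq z x y m0 m1 m2 hz hx hy)⟩
      | exact Or.inl ⟨m0, m1, m2, hw, (perm_cba x y z).trans (blackset_eq z y x m0 m1 m2 hz hy hx)⟩
  · have hx := ptlemW (x 0) (x 1) (x 2) m0 m1 m2 N hx0 hx1 hx2 s1 hw
    have hy := ptlemW (y 0) (y 1) (y 2) m0 m1 m2 N hy0 hy1 hy2 s2 hw
    have hz := ptlemW (z 0) (z 1) (z 2) m0 m1 m2 N hz0 hz1 hz2 s3 hw
    clear hx0 hx1 hx2 hy0 hy1 hy2 hz0 hz1 hz2 s1 s2 s3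
    rcases hx with hx|hx|hx <;> rcases hy with hy|hy|hy <;> rcases hz with hz|hz|hz <;>
      first
      | exact same_pat hx hy d1
      | exact same_pat hx hz d2
      | exact same_pat hy hz d3
      | exact Or.inr ⟨m0, m1, m2, hw, whiteset_eq x y z m0 m1 m2 hx hy hz⟩
      | exact Or.inr ⟨m0, m1, m2, hw, (perm_acb x y z).trans (whiteset_eq x z y m0 m1 m2 hx hz hy)⟩
      | exact Or.inr ⟨m0, m1, m2, hw, (perm_bac x y z).trans (whiteset_eq y x z m0 m1 m2 hy hx hz)⟩
      | exact Or.inr ⟨m0, m1, m2, hw, (perm_bca x y z).trans (whiteset_eq y z x m0 m1 m2 hy hz hx)⟩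
      | exact Or.inr ⟨m0, m1, m2, hw, (perm_cab x y z).trans (whiteset_eq z x y m0 m1 m2 hz hx hy)⟩
      | exact Or.inr ⟨m0, m1, m2, hw, (perm_cba x y z).trans (whiteset_eq z y x m0 m1 m2 hz hy hx)⟩

lemma mem_black {v : Fin 3 → ℕ} {r s t : ℕ} (h : v ∈ BA.blackSet r s t) :
    (v 0 = r+1 ∧ v 1 = s ∧ v 2 = t) ∨ (v 0 = r ∧ v 1 = s+1 ∧ v 2 = t) ∨
    (v 0 = r ∧ v 1 = s ∧ v 2 = t+1) := by
  simp only [BA.blackSet, Set.mem_insert_iff, Set.mem_singleton_iff] at h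
  rcases h with rfl | rfl | rfl <;> simp

lemma mem_white {v : Fin 3 → ℕ} {r s t : ℕ} (h : v ∈ BA.whiteSet r s t) :
    (v 0 = r ∧ v 1 = s+1 ∧ v 2 = t+1) ∨ (v 0 = r+1 ∧ v 1 = s ∧ v 2 = t+1) ∨
    (v 0 = r+1 ∧ v 1 = s+1 ∧ v 2 = t) := by
  simp only [BA.whiteSet, Set.mem_insert_iff, Set.mem_singleton_iff] at h
  rcases h with rfl | rfl | rfl <;> simp

lemma notboth {N : ℕ} {S : Set (Fin 3 → ℕ)} (hb : BA.IsBlack N S) (hw : BA.IsWhite N S) :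
    False := by
  obtain ⟨r, s, t, h1, rfl⟩ := hb
  obtain ⟨p, q, w, h2, hEq⟩ := hw
  have hA : ![r+1, s, t] ∈ BA.whiteSet p q w := hEq ▸ Set.mem_insert _ _
  have hB : ![r, s+1, t] ∈ BA.whiteSet p q w :=
    hEq ▸ Set.mem_insert_iff.mpr (Or.inr (Set.mem_insert _ _))
  have hC : ![r, s, t+1] ∈ BA.whiteSet p q w :=
    hEq ▸ Set.mem_insert_iff.mpr (Or.inr (Set.mem_insert_iff.mpr (Or.inr rfl)))
  have hA' := mem_white hA
  have hB' := mem_white hB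
  have hC' := mem_white hC
  simp only [Matrix.cons_val_zero, Matrix.cons_val_one, Matrix.head_cons,
    Matrix.cons_val_two, Matrix.tail_cons] at hA' hB' hC'
  omega

lemma black_inj {N : ℕ} : Set.InjOn (fun w : Fin 3 → ℕ => BA.blackSet (w 0) (w 1) (w 2))
    (BA.Delta (N - 1)) := by
  intro u _ v _ h
  simp only at h
  have hA : ![u 0 + 1, u 1, u 2] ∈ BA.blackSet (v 0) (v 1) (v 2) := by
    rw [← h]; exact Set.mem_insert _ _
  have hB : ![u 0, u 1 + 1, u 2] ∈ BA.blackSet (v 0) (v 1) (v 2) := by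
    rw [← h]; exact Set.mem_insert_iff.mpr (Or.inr (Set.mem_insert _ _))
  have hA' := mem_black hA
  have hB' := mem_black hB
  simp only [Matrix.cons_val_zero, Matrix.cons_val_one, Matrix.head_cons,
    Matrix.cons_val_two, Matrix.tail_cons] at hA' hB'
  have hc : u 0 = v 0 ∧ u 1 = v 1 ∧ u 2 = v 2 := by omega
  exact funext_iff.mpr (forall_fin3.mpr ⟨hc.1, hc.2.1, hc.2.2⟩)

lemma white_inj {N : ℕ} : Set.InjOn (fun w : Fin 3 → ℕ => BA.whiteSet (w 0) (w 1) (w 2))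
    (BA.Delta (N - 2)) := by
  intro u _ v _ h
  simp only at h
  have hA : ![u 0, u 1 + 1, u 2 + 1] ∈ BA.whiteSet (v 0) (v 1) (v 2) := by
    rw [← h]; exact Set.mem_insert _ _
  have hB : ![u 0 + 1, u 1, u 2 + 1] ∈ BA.whiteSet (v 0) (v 1) (v 2) := by
    rw [← h]; exact Set.mem_insert_iff.mpr (Or.inr (Set.mem_insert _ _))
  have hA' := mem_white hA
  have hB' := mem_white hB
  simp only [Matrix.cons_val_zero, Matrix.cons_val_one, Matrix.head_cons,
    Matrix.cons_val_two, Matrix.tail_cons] at hA' hB'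
  have hc : u 0 = v 0 ∧ u 1 = v 1 ∧ u 2 = v 2 := by omega
  exact funext_iff.mpr (forall_fin3.mpr ⟨hc.1, hc.2.1, hc.2.2⟩)

end BAProof

theorem BAProof.stmt5_aux (N : ℕ) (hN : 1 ≤ N) :
    (∀ S : Set (Fin 3 → ℕ), BA.IsClique3 N S →
      (BA.IsBlack N S ∨ BA.IsWhite N S) ∧ ¬ (BA.IsBlack N S ∧ BA.IsWhite N S)) ∧
    Set.BijOn (fun w : Fin 3 → ℕ => BA.blackSet (w 0) (w 1) (w 2))
      (BA.Delta (N - 1)) {S | BA.IsBlack N S} ∧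
    (2 ≤ N →
      Set.BijOn (fun w : Fin 3 → ℕ => BA.whiteSet (w 0) (w 1) (w 2))
        (BA.Delta (N - 2)) {S | BA.IsWhite N S}) := by
  refine ⟨?_, ⟨?_, BAProof.black_inj, ?_⟩, fun h2 => ⟨?_, BAProof.white_inj, ?_⟩⟩
  · intro S hS
    obtain ⟨hsub, hcard, hadj⟩ := hS
    rw [Set.ncard_eq_three] at hcard
    obtain ⟨x, y, z, hxy, hxz, hyz, rfl⟩ := hcard
    have mx : x ∈ ({x, y, z} : Set (Fin 3 → ℕ)) := Set.mem_insert _ _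
    have my : y ∈ ({x, y, z} : Set (Fin 3 → ℕ)) :=
      Set.mem_insert_iff.mpr (Or.inr (Set.mem_insert _ _))
    have mz : z ∈ ({x, y, z} : Set (Fin 3 → ℕ)) := by
      exact Set.mem_insert_iff.mpr (Or.inr (Set.mem_insert_iff.mpr (Or.inr rfl)))
    refine ⟨BAProof.classify N x y z (hadj x mx y my hxy) (hadj x mx z mz hxz)
      (hadj y my z mz hyz) (hsub mx) (hsub my) (hsub mz), ?_⟩
    rintro ⟨hb, hw⟩
    exact BAProof.notboth hb hw
  · intro w hw
    have hs : w 0 + w 1 + w 2 = N - 1 := hw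
    exact ⟨w 0, w 1, w 2, by omega, rfl⟩
  · intro S hS
    obtain ⟨r, s, t, h1, rfl⟩ := hS
    refine ⟨![r, s, t], ?_, ?_⟩
    · show (![r, s, t] 0 : ℕ) + ![r, s, t] 1 + ![r, s, t] 2 = N - 1
      simp; omega
    · simp
  · intro w hw
    have hs : w 0 + w 1 + w 2 = N - 2 := hw
    exact ⟨w 0, w 1, w 2, by omega, rfl⟩
  · intro S hS
    obtain ⟨r, s, t, h1, rfl⟩ := hS
    refine ⟨![r, s, t], ?_, ?_⟩
    · show (![r, s, t] 0 : ℕ) + ![r, s, t] 1 + ![r, s, t] 2 = N - 2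
      simp; omega
    · simp

/-- For `N ≥ 1`: every 3-clique in `Δ_N` is black or white and not both;
`(r,s,t) ↦ {(r+1,s,t),(r,s+1,t),(r,s,t+1)}` is a bijection from `Δ_{N-1}` onto
the black 3-cliques; and for `N ≥ 2`,
`(r,s,t) ↦ {(r,s+1,t+1),(r+1,s,t+1),(r+1,s+1,t)}` is a bijection from
`Δ_{N-2}` onto the white 3-cliques. -/
theorem stmt5 (N : ℕ) (hN : 1 ≤ N) :
    (∀ S : Set (Fin 3 → ℕ), BA.IsClique3 N S →
      (BA.IsBlack N S ∨ BA.IsWhite N S) ∧ ¬ (BA.IsBlack N S ∧ BA.IsWhite N S)) ∧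
    Set.BijOn (fun w : Fin 3 → ℕ => BA.blackSet (w 0) (w 1) (w 2))
      (BA.Delta (N - 1)) {S | BA.IsBlack N S} ∧
    (2 ≤ N →
      Set.BijOn (fun w : Fin 3 → ℕ => BA.whiteSet (w 0) (w 1) (w 2))
        (BA.Delta (N - 2)) {S | BA.IsWhite N S}) := by
  exact BAProof.stmt5_aux N hN
end

section
/- Let N be a natural number and let λ, μ be adjacent locations in Δ_N. Then there exists exactly one location ν ∈ Δ_N such that {λ, μ, ν} is a black 3-clique, and there exists at most one location ν ∈ Δ_N such that {λ, μ, ν} is a white 3-clique. -/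
lemma vecEq (v : Fin 3 → ℕ) (a b c : ℕ) : v = ![a,b,c] ↔ v 0 = a ∧ v 1 = b ∧ v 2 = c := by
  constructor
  · rintro rfl; simp
  · rintro ⟨h0,h1,h2⟩; funext k; fin_cases k <;> simp_all

lemma vecEq' (v : Fin 3 → ℕ) (a b c : ℕ) : ![a,b,c] = v ↔ v 0 = a ∧ v 1 = b ∧ v 2 = c :=
  eq_comm.trans (vecEq v a b c)

lemma tripleEq (l m n A B C : Fin 3 → ℕ) :
    ({l,m,n} : Set (Fin 3 → ℕ)) = {A,B,C} ↔
      (l = A ∨ l = B ∨ l = C) ∧ (m = A ∨ m = B ∨ m = C) ∧ (n = A ∨ n = B ∨ n = C) ∧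
      (A = l ∨ A = m ∨ A = n) ∧ (B = l ∨ B = m ∨ B = n) ∧ (C = l ∨ C = m ∨ C = n) := by
  constructor
  · intro h
    have h' := Set.ext_iff.mp h
    simp only [Set.mem_insert_iff, Set.mem_singleton_iff] at h'
    exact ⟨(h' l).mp (by tauto), (h' m).mp (by tauto), (h' n).mp (by tauto),
      (h' A).mpr (by tauto), (h' B).mpr (by tauto), (h' C).mpr (by tauto)⟩
  · rintro ⟨hl, hm, hn, hA, hB, hC⟩
    ext x
    simp only [Set.mem_insert_iff, Set.mem_singleton_iff]
    constructor
    · rintro (rfl|rfl|rfl) <;> tauto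
    · rintro (rfl|rfl|rfl) <;> tauto

lemma blackCoord {l m n : Fin 3 → ℕ} {r s t : ℕ}
    (hS : ({l,m,n} : Set (Fin 3 → ℕ)) = BA.blackSet r s t) :
    (n 0 + l 0 + m 0 = 3*r+1 ∧ n 1 + l 1 + m 1 = 3*s+1 ∧ n 2 + l 2 + m 2 = 3*t+1) ∧
    ((l 0 = r+1 ∧ l 1 = s ∧ l 2 = t) ∨ (l 0 = r ∧ l 1 = s+1 ∧ l 2 = t) ∨ (l 0 = r ∧ l 1 = s ∧ l 2 = t+1)) ∧
    ((m 0 = r+1 ∧ m 1 = s ∧ m 2 = t) ∨ (m 0 = r ∧ m 1 = s+1 ∧ m 2 = t) ∨ (m 0 = r ∧ m 1 = s ∧ m 2 = t+1)) ∧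
    (l 0 ≠ m 0 ∨ l 1 ≠ m 1 ∨ l 2 ≠ m 2) := by
  simp only [BA.blackSet] at hS
  rw [tripleEq] at hS
  simp only [vecEq, vecEq'] at hS
  omega

lemma whiteCoord {l m n : Fin 3 → ℕ} {r s t : ℕ}
    (hS : ({l,m,n} : Set (Fin 3 → ℕ)) = BA.whiteSet r s t) :
    (n 0 + l 0 + m 0 = 3*r+2 ∧ n 1 + l 1 + m 1 = 3*s+2 ∧ n 2 + l 2 + m 2 = 3*t+2) ∧
    ((l 0 = r ∧ l 1 = s+1 ∧ l 2 = t+1) ∨ (l 0 = r+1 ∧ l 1 = s ∧ l 2 = t+1) ∨ (l 0 = r+1 ∧ l 1 = s+1 ∧ l 2 = t)) ∧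
    ((m 0 = r ∧ m 1 = s+1 ∧ m 2 = t+1) ∨ (m 0 = r+1 ∧ m 1 = s ∧ m 2 = t+1) ∨ (m 0 = r+1 ∧ m 1 = s+1 ∧ m 2 = t)) ∧
    (l 0 ≠ m 0 ∨ l 1 ≠ m 1 ∨ l 2 ≠ m 2) := by
  simp only [BA.whiteSet] at hS
  rw [tripleEq] at hS
  simp only [vecEq, vecEq'] at hS
  omega

lemma blackUnique {N : ℕ} {l m n n' : Fin 3 → ℕ}
    (h : BA.IsBlack N {l, m, n}) (h' : BA.IsBlack N {l, m, n'}) : n = n' := by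
  obtain ⟨r, s, t, _, hS⟩ := h
  obtain ⟨r', s', t', _, hS'⟩ := h'
  have c := blackCoord hS
  have c' := blackCoord hS'
  clear hS hS'
  have e0 : n 0 = n' 0 := by omega
  have e1 : n 1 = n' 1 := by omega
  have e2 : n 2 = n' 2 := by omega
  funext k; fin_cases k
  · exact e0
  · exact e1
  · exact e2

lemma whiteUnique {N : ℕ} {l m n n' : Fin 3 → ℕ}
    (h : BA.IsWhite N {l, m, n}) (h' : BA.IsWhite N {l, m, n'}) : n = n' := by
  obtain ⟨r, s, t, _, hS⟩ := h
  obtain ⟨r', s', t', _, hS'⟩ := h'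
  have c := whiteCoord hS
  have c' := whiteCoord hS'
  clear hS hS'
  have e0 : n 0 = n' 0 := by omega
  have e1 : n 1 = n' 1 := by omega
  have e2 : n 2 = n' 2 := by omega
  funext k; fin_cases k
  · exact e0
  · exact e1
  · exact e2

set_option maxHeartbeats 1000000 in
/-- Each edge of `Δ_N` is contained in a unique black 3-clique and in at most
one white 3-clique. -/
theorem stmt6 (N : ℕ) (l m : Fin 3 → ℕ)
    (hl : l ∈ BA.Delta N) (hm : m ∈ BA.Delta N) (hadj : BA.Adj l m) :
    (∃! n : Fin 3 → ℕ, BA.IsBlack N {l, m, n}) ∧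
      (∀ n n' : Fin 3 → ℕ, BA.IsWhite N {l, m, n} → BA.IsWhite N {l, m, n'} →
        n = n') := by
  refine ⟨?_, fun n n' hw hw' => whiteUnique hw hw'⟩
  simp only [BA.Delta, Set.mem_setOf_eq] at hl hm
  obtain ⟨i, j, hij, hv⟩ := hadj
  have key : (-1 ≤ (l 0 : ℤ) - m 0 ∧ (l 0 : ℤ) - m 0 ≤ 1) ∧
      (-1 ≤ (l 1 : ℤ) - m 1 ∧ (l 1 : ℤ) - m 1 ≤ 1) ∧
      (-1 ≤ (l 2 : ℤ) - m 2 ∧ (l 2 : ℤ) - m 2 ≤ 1) ∧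
      ((l 0 : ℤ) - m 0) + ((l 1 : ℤ) - m 1) + ((l 2 : ℤ) - m 2) = 0 ∧
      ((l 0 : ℤ) - m 0 = 1 ∨ (l 1 : ℤ) - m 1 = 1 ∨ (l 2 : ℤ) - m 2 = 1) := by
    have h0 := hv 0
    have h1 := hv 1
    have h2 := hv 2
    fin_cases i <;> fin_cases j <;>
      first
        | exact absurd rfl hij
        | (simp [Fin.ext_iff] at h0 h1 h2; omega)
  clear hv hij
  have hb : BA.IsBlack N
      {l, m, ![3 * min (l 0) (m 0) + 1 - l 0 - m 0,
              3 * min (l 1) (m 1) + 1 - l 1 - m 1,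
              3 * min (l 2) (m 2) + 1 - l 2 - m 2]} := by
    refine ⟨min (l 0) (m 0), min (l 1) (m 1), min (l 2) (m 2), by omega, ?_⟩
    simp only [BA.blackSet]
    rw [tripleEq]
    simp only [vecEq, vecEq', Matrix.cons_val_zero, Matrix.cons_val_one, Matrix.head_cons,
      Matrix.cons_val_two, Matrix.tail_cons]
    omega
  exact ⟨_, hb, fun y hy => blackUnique hy hb⟩
end

section
/- Let N be a natural number and let λ = (r,s,t) and μ = (r',s',t') be locations in Δ_N. Then min(r,r') + min(s,s') + min(t,t') = N − ∂(λ,μ), where ∂ denotes the graph distance on Δ_N. (In other words, the rank of the componentwise meet λ ∧ μ equals N minus the distance between λ and μ.) -/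
/-- potential -/
def BA.phi (u v : Fin 3 → ℕ) : ℕ := (u 0 - v 0) + (u 1 - v 1) + (u 2 - v 2)

lemma BA.adj_phi {w w' v : Fin 3 → ℕ} (h : BA.Adj w w') :
    BA.phi w v ≤ BA.phi w' v + 1 := by
  obtain ⟨i, j, hij, h⟩ := h
  unfold BA.phi
  fin_cases i <;> fin_cases j <;>
    first
    | exact absurd rfl hij
    | (have h0 := h 0; have h1 := h 1; have h2 := h 2; simp at h0 h1 h2; omega)

lemma BA.lb (N : ℕ) (v : Fin 3 → ℕ) :
    ∀ n f u, BA.IsWalk N n f u v → BA.phi u v ≤ n := by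
  intro n
  induction n with
  | zero =>
    intro f u ⟨h0, hn, _, _⟩
    have : u = v := h0 ▸ hn
    subst this; unfold BA.phi; omega
  | succ n ih =>
    intro f u ⟨h0, hn, hm, ha⟩
    have hwalk : BA.IsWalk N n (fun i => f (i + 1)) (f 1) v :=
      ⟨rfl, hn, fun i hi => hm (i + 1) (by omega), fun i hi => ha (i + 1) (by omega)⟩
    have h1 := ih _ _ hwalk
    have h2 : BA.phi u v ≤ BA.phi (f 1) v + 1 := by
      have := ha 0 (by omega)
      rw [h0] at this
      exact BA.adj_phi this
    omega

lemma BA.extend (N d : ℕ) (u u' v : Fin 3 → ℕ) (hadj : BA.Adj u u')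
    (hu : u ∈ BA.Delta N) (h : ∃ f, BA.IsWalk N d f u' v) :
    ∃ f, BA.IsWalk N (d + 1) f u v := by
  obtain ⟨f, h0, hn, hm, ha⟩ := h
  refine ⟨fun n => if n = 0 then u else f (n - 1), by simp, by simp [hn], ?_, ?_⟩
  · intro i hi
    by_cases hi0 : i = 0
    · simpa [hi0]
    · simpa [hi0] using hm (i - 1) (by omega)
  · intro i hi
    by_cases hi0 : i = 0
    · simpa [hi0, h0] using hadj
    · have hi1 : i - 1 < d := by omega
      have := ha (i - 1) hi1
      have he : i - 1 + 1 = i := by omega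
      rw [he] at this
      simpa [hi0] using this

lemma BA.move_adj (u : Fin 3 → ℕ) (i j : Fin 3) (hij : i ≠ j) (hi : 0 < u i) :
    BA.Adj u (fun k => if k = i then u k - 1 else if k = j then u k + 1 else u k) := by
  refine ⟨i, j, hij, fun k => ?_⟩
  by_cases h1 : k = i <;> by_cases h2 : k = j <;>
    simp [h1, h2, hij, Ne.symm hij] <;> omega

lemma BA.ub (N : ℕ) : ∀ d u v, u ∈ BA.Delta N → v ∈ BA.Delta N →
    BA.phi u v = d → ∃ f, BA.IsWalk N d f u v := by
  intro d
  induction d with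
  | zero =>
    intro u v hu hv hd
    have huv : u = v := by
      unfold BA.phi at hd
      have hu' : u 0 + u 1 + u 2 = N := hu
      have hv' : v 0 + v 1 + v 2 = N := hv
      have h3 : u 0 = v 0 ∧ u 1 = v 1 ∧ u 2 = v 2 := by omega
      funext k
      fin_cases k
      exacts [h3.1, h3.2.1, h3.2.2]
    exact ⟨fun _ => u, rfl, huv ▸ rfl, fun i hi => by simpa using hu, fun i hi => by omega⟩
  | succ d ih =>
    intro u v hu hv hd
    have hu' : u 0 + u 1 + u 2 = N := hu
    have hv' : v 0 + v 1 + v 2 = N := hv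
    unfold BA.phi at hd
    have hex : (v 0 < u 0 ∨ v 1 < u 1 ∨ v 2 < u 2) ∧
        (u 0 < v 0 ∨ u 1 < v 1 ∨ u 2 < v 2) := by omega
    obtain ⟨hi, hj⟩ := hex
    -- pick i with u i > v i and j with u j < v j
    have : ∃ i j : Fin 3, i ≠ j ∧ v i < u i ∧ u j < v j := by
      rcases hi with h | h | h <;> rcases hj with h' | h' | h'
      all_goals first
        | exact ⟨0, 1, by decide, h, h'⟩ | exact ⟨0, 2, by decide, h, h'⟩
        | exact ⟨1, 0, by decide, h, h'⟩ | exact ⟨1, 2, by decide, h, h'⟩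
        | exact ⟨2, 0, by decide, h, h'⟩ | exact ⟨2, 1, by decide, h, h'⟩
        | omega
    obtain ⟨i, j, hij, hvi, huj⟩ := this
    set u' : Fin 3 → ℕ := fun k => if k = i then u k - 1 else if k = j then u k + 1 else u k with hu'def
    have hadj : BA.Adj u u' := BA.move_adj u i j hij (by omega)
    have hmem : u' ∈ BA.Delta N := by
      show u' 0 + u' 1 + u' 2 = N
      simp only [hu'def]
      clear hd
      fin_cases i <;> fin_cases j <;>
        first
        | exact absurd rfl hij
        | (clear hadj hu'def; simp_all [Fin.ext_iff]; omega)
    have hphi : BA.phi u' v = d := by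
      unfold BA.phi
      simp only [hu'def]
      fin_cases i <;> fin_cases j <;>
        first
        | exact absurd rfl hij
        | (clear hadj hu'def; simp_all [Fin.ext_iff]; omega)
    exact BA.extend N d u u' v hadj hu (ih u' v hmem hv hphi)

/-- For locations `λ = (r,s,t)` and `μ = (r',s',t')` of `Δ_N`:
`min(r,r') + min(s,s') + min(t,t') = N - ∂(λ,μ)`. -/
theorem stmt7 (N : ℕ) (u v : Fin 3 → ℕ)
    (hu : u ∈ BA.Delta N) (hv : v ∈ BA.Delta N) :
    min (u 0) (v 0) + min (u 1) (v 1) + min (u 2) (v 2) = N - BA.dist N u v := by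
  have hu' : u 0 + u 1 + u 2 = N := hu
  have hv' : v 0 + v 1 + v 2 = N := hv
  obtain ⟨f, hf⟩ := BA.ub N (BA.phi u v) u v hu hv rfl
  have hle : BA.dist N u v ≤ BA.phi u v := Nat.sInf_le ⟨f, hf⟩
  have hmem := Nat.sInf_mem (s := {n | ∃ f, BA.IsWalk N n f u v}) ⟨BA.phi u v, f, hf⟩
  obtain ⟨g, hg⟩ := hmem
  have hge : BA.phi u v ≤ BA.dist N u v := BA.lb N v _ g u hg
  have : BA.dist N u v = BA.phi u v := le_antisymm hle hge
  rw [this]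
  unfold BA.phi
  omega
end

section
/- Let F be a field, N a natural number, and V an (N+1)-dimensional vector space over F. Let {U_i}_{i=0}^N, {U'_i}_{i=0}^N, {U''_i}_{i=0}^N be flags on V. Then the following are equivalent: (i) the three flags are totally opposite; (ii) for every 0 ≤ n ≤ N, the three sequences {U_i}_{i=0}^{N−n}, {U_{N−n} ∩ U'_{n+i}}_{i=0}^{N−n}, and {U_{N−n} ∩ U''_{n+i}}_{i=0}^{N−n} are flags on the subspace U_{N−n} (each consisting of nested subspaces of U_{N−n} of dimensions 1, 2, …, N−n+1) that are mutually opposite, meaning that for any two of the three sequences, say {W_i} and {W'_i}, one has W_i ∩ W'_j = 0 whenever i + j < N − n. -/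
/-- A flag on `V` (of diameter `N`): nested subspaces `U_0 ⊆ ⋯ ⊆ U_N` with
`dim U_i = i + 1`. -/
def BA.IsFlag {F V : Type*} [Field F] [AddCommGroup V] [Module F V]
    (N : ℕ) (U : ℕ → Submodule F V) : Prop :=
  (∀ i ≤ N, Module.finrank F (U i) = i + 1) ∧ ∀ i, i + 1 ≤ N → U i ≤ U (i + 1)

/-- Two flags are opposite whenever `U_i ∩ U'_j = 0` for `i + j < N`. -/
def BA.Opposite {F V : Type*} [Field F] [AddCommGroup V] [Module F V]
    (N : ℕ) (U U' : ℕ → Submodule F V) : Prop :=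
  ∀ i j : ℕ, i ≤ N → j ≤ N → i + j < N → U i ⊓ U' j = ⊥

/-- Three flags are totally opposite whenever
`U_{N-r} ∩ U'_{N-s} ∩ U''_{N-t} = 0` for all `r,s,t ≤ N` with `r+s+t > N`. -/
def BA.TotallyOpposite {F V : Type*} [Field F] [AddCommGroup V] [Module F V]
    (N : ℕ) (U U' U'' : ℕ → Submodule F V) : Prop :=
  ∀ r s t : ℕ, r ≤ N → s ≤ N → t ≤ N → N < r + s + t →
    U (N - r) ⊓ U' (N - s) ⊓ U'' (N - t) = ⊥

/-- `A` is a flag (of diameter `m`) on the subspace `W`: nested subspaces of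
`W` of dimensions `1, 2, …, m+1`. -/
def BA.IsFlagOn {F V : Type*} [Field F] [AddCommGroup V] [Module F V]
    (m : ℕ) (W : Submodule F V) (A : ℕ → Submodule F V) : Prop :=
  (∀ i ≤ m, Module.finrank F (A i) = i + 1 ∧ A i ≤ W) ∧
    ∀ i, i + 1 ≤ m → A i ≤ A (i + 1)

private lemma BA.flag_mono {F V : Type*} [Field F] [AddCommGroup V] [Module F V]
    {N : ℕ} {U : ℕ → Submodule F V} (h2 : ∀ i, i + 1 ≤ N → U i ≤ U (i + 1)) :
    ∀ a b, a ≤ b → b ≤ N → U a ≤ U b := by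
  intro a b hab hb
  induction b with
  | zero => simp [Nat.le_zero.mp hab]
  | succ k ih =>
    rcases Nat.lt_or_ge a (k + 1) with h | h
    · exact (ih (by omega) (by omega)).trans (h2 k hb)
    · have : a = k + 1 := by omega
      simp [this]

private lemma BA.dim_inf {F V : Type*} [Field F] [AddCommGroup V] [Module F V]
    [FiniteDimensional F V] {N : ℕ} (hV : Module.finrank F V = N + 1)
    {U U' : ℕ → Submodule F V} (hU : BA.IsFlag N U) (hU' : BA.IsFlag N U')
    (hopp : ∀ i j : ℕ, i ≤ N → j ≤ N → i + j < N → U i ⊓ U' j = ⊥)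
    {n i : ℕ} (hn : n ≤ N) (hi : i ≤ N - n) :
    Module.finrank F ↥(U (N - n) ⊓ U' (n + i)) = i + 1 := by
  have hp : Module.finrank F (U (N - n)) = N - n + 1 := hU.1 _ (by omega)
  have hq : Module.finrank F (U' (n + i)) = n + i + 1 := hU'.1 _ (by omega)
  have hsup : Module.finrank F ↥(U (N - n) ⊔ U' (n + i)) ≤ N + 1 :=
    hV ▸ Submodule.finrank_le _
  have hkey := Submodule.finrank_sup_add_finrank_inf_eq (U (N - n)) (U' (n + i))
  have hup : Module.finrank F ↥(U (N - n) ⊓ U' (n + i)) ≤ i + 1 := by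
    rcases n with _ | m
    · have hle : U (N - 0) ⊓ U' (0 + i) ≤ U' (0 + i) := inf_le_right
      have := Submodule.finrank_mono hle
      omega
    · have hd : (U (N - (m + 1)) ⊓ U' (m + 1 + i)) ⊓ U' m = ⊥ := by
        rw [eq_bot_iff, ← hopp (N - (m + 1)) m (by omega) (by omega) (by omega)]
        exact inf_le_inf_right _ inf_le_left
      have hsum := Submodule.finrank_sup_add_finrank_inf_eq
        (U (N - (m + 1)) ⊓ U' (m + 1 + i)) (U' m)
      rw [hd] at hsum
      have hm : Module.finrank F (U' m) = m + 1 := hU'.1 m (by omega)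
      have hle : (U (N - (m + 1)) ⊓ U' (m + 1 + i)) ⊔ U' m ≤ U' (m + 1 + i) :=
        sup_le inf_le_right (BA.flag_mono hU'.2 m (m + 1 + i) (by omega) (by omega))
      have := Submodule.finrank_mono hle
      simp only [finrank_bot, Nat.add_zero] at hsum
      omega
  omega

/-- Three flags on `V` are totally opposite iff for every `0 ≤ n ≤ N` the
three sequences `{U_i}`, `{U_{N-n} ∩ U'_{n+i}}`, `{U_{N-n} ∩ U''_{n+i}}`
(for `0 ≤ i ≤ N-n`) are mutually opposite flags on `U_{N-n}`. -/
theorem stmt9 {F V : Type*} [Field F] [AddCommGroup V] [Module F V] (N : ℕ)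
    (hV : Module.finrank F V = N + 1) (U U' U'' : ℕ → Submodule F V)
    (hU : BA.IsFlag N U) (hU' : BA.IsFlag N U') (hU'' : BA.IsFlag N U'') :
    BA.TotallyOpposite N U U' U'' ↔
      ∀ n ≤ N,
        BA.IsFlagOn (N - n) (U (N - n)) (fun i => U i) ∧
        BA.IsFlagOn (N - n) (U (N - n)) (fun i => U (N - n) ⊓ U' (n + i)) ∧
        BA.IsFlagOn (N - n) (U (N - n)) (fun i => U (N - n) ⊓ U'' (n + i)) ∧
        BA.Opposite (N - n) (fun i => U i) (fun i => U (N - n) ⊓ U' (n + i)) ∧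
        BA.Opposite (N - n) (fun i => U i) (fun i => U (N - n) ⊓ U'' (n + i)) ∧
        BA.Opposite (N - n) (fun i => U (N - n) ⊓ U' (n + i))
          (fun i => U (N - n) ⊓ U'' (n + i)) := by
  haveI : FiniteDimensional F V := FiniteDimensional.of_finrank_pos (by omega)
  have hUtop : U N = ⊤ := Submodule.eq_top_of_finrank_eq (by rw [hU.1 N le_rfl, hV])
  have hU'top : U' N = ⊤ := Submodule.eq_top_of_finrank_eq (by rw [hU'.1 N le_rfl, hV])
  have hU''top : U'' N = ⊤ := Submodule.eq_top_of_finrank_eq (by rw [hU''.1 N le_rfl, hV])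
  constructor
  · intro hTO n hn
    have hopp' : ∀ i j : ℕ, i ≤ N → j ≤ N → i + j < N → U i ⊓ U' j = ⊥ := by
      intro i j hi hj hij
      have h := hTO (N - i) (N - j) 0 (by omega) (by omega) (by omega) (by omega)
      rw [show N - (N - i) = i by omega, show N - (N - j) = j by omega] at h
      rw [show N - 0 = N from rfl, hU''top, inf_top_eq] at h
      exact h
    have hopp'' : ∀ i j : ℕ, i ≤ N → j ≤ N → i + j < N → U i ⊓ U'' j = ⊥ := by
      intro i j hi hj hij
      have h := hTO (N - i) 0 (N - j) (by omega) (by omega) (by omega) (by omega)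
      rw [show N - (N - i) = i by omega, show N - (N - j) = j by omega] at h
      rw [show N - 0 = N from rfl, hU'top, inf_top_eq] at h
      exact h
    refine ⟨⟨?_, ?_⟩, ⟨?_, ?_⟩, ⟨?_, ?_⟩, ?_, ?_, ?_⟩
    · intro i hi
      exact ⟨hU.1 i (by omega), BA.flag_mono hU.2 i (N - n) hi (by omega)⟩
    · intro i hi
      exact hU.2 i (by omega)
    · intro i hi
      exact ⟨BA.dim_inf hV hU hU' hopp' hn hi, inf_le_left⟩
    · intro i hi
      exact le_inf inf_le_left (inf_le_right.trans (hU'.2 (n + i) (by omega)))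
    · intro i hi
      exact ⟨BA.dim_inf hV hU hU'' hopp'' hn hi, inf_le_left⟩
    · intro i hi
      exact le_inf inf_le_left (inf_le_right.trans (hU''.2 (n + i) (by omega)))
    · intro i j hi hj hij
      rw [eq_bot_iff, ← hopp' i (n + j) (by omega) (by omega) (by omega)]
      exact inf_le_inf_left _ inf_le_right
    · intro i j hi hj hij
      rw [eq_bot_iff, ← hopp'' i (n + j) (by omega) (by omega) (by omega)]
      exact inf_le_inf_left _ inf_le_right
    · intro i j hi hj hij
      have h := hTO n (N - n - i) (N - n - j) hn (by omega) (by omega) (by omega)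
      rw [show N - (N - n - i) = n + i by omega, show N - (N - n - j) = n + j by omega] at h
      rw [eq_bot_iff, ← h]
      exact le_inf (le_inf (inf_le_left.trans inf_le_left) (inf_le_left.trans inf_le_right))
        (inf_le_right.trans inf_le_right)
  · intro h r s t hr hs ht hrst
    rcases le_or_gt (r + s) N with hrs | hrs
    · rcases le_or_gt (r + t) N with hrt | hrt
      · obtain ⟨-, -, -, -, -, h6⟩ := h r hr
        have h6' := h6 (N - r - s) (N - r - t) (by omega) (by omega) (by omega)
        simp only [show r + (N - r - s) = N - s by omega,
          show r + (N - r - t) = N - t by omega] at h6'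
        rw [eq_bot_iff, ← h6']
        exact le_inf inf_le_left
          (le_inf (inf_le_left.trans inf_le_left) inf_le_right)
      · obtain ⟨-, -, -, -, h5, -⟩ := h 0 (Nat.zero_le N)
        have h5' := h5 (N - r) (N - t) (by omega) (by omega) (by omega)
        simp only [Nat.sub_zero, Nat.zero_add] at h5'
        rw [eq_bot_iff, ← h5']
        exact le_inf (inf_le_left.trans inf_le_left)
          (le_inf (le_top.trans hUtop.ge) inf_le_right)
    · obtain ⟨-, -, -, h4, -, -⟩ := h 0 (Nat.zero_le N)
      have h4' := h4 (N - r) (N - s) (by omega) (by omega) (by omega)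
      simp only [Nat.sub_zero, Nat.zero_add] at h4'
      rw [eq_bot_iff, ← h4']
      refine le_inf (inf_le_left.trans inf_le_left)
        (le_inf (le_top.trans hUtop.ge) (inf_le_left.trans inf_le_right))
end

section
/- Let F be a field, N a natural number, and V an (N+1)-dimensional vector space over F. Let {U_i}_{i=0}^N, {U'_i}_{i=0}^N, {U''_i}_{i=0}^N be totally opposite flags on V. Then for all natural numbers r, s, t with r + s + t ≤ N, the subspace U_{N−r} ∩ U'_{N−s} ∩ U''_{N−t} has dimension N − r − s − t + 1. -/
open Module Submodule

section Aux
variable {F V : Type*} [Field F] [AddCommGroup V] [Module F V]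

lemma BA.flag_mono_s10 {N : ℕ} {U : ℕ → Submodule F V}
    (hU : BA.IsFlag N U) {i j : ℕ} (hij : i ≤ j) (hjN : j ≤ N) : U i ≤ U j := by
  induction j with
  | zero =>
    have : i = 0 := by omega
    simp [this]
  | succ n ih =>
    rcases Nat.lt_or_ge i (n+1) with h | h
    · exact le_trans (ih (by omega) (by omega)) (hU.2 n hjN)
    · have : i = n+1 := by omega
      simp [this]

lemma BA.flag_step [FiniteDimensional F V] {N : ℕ} {U : ℕ → Submodule F V}
    (hU : BA.IsFlag N U) {m : ℕ} (hm : m + 1 ≤ N) (W : Submodule F V)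
    (hW : W ≤ U (m+1)) :
    finrank F W ≤ finrank F ↥(W ⊓ U m) + 1 := by
  have h1 : finrank F ↥(W ⊔ U m) + finrank F ↥(W ⊓ U m)
      = finrank F W + finrank F ↥(U m) :=
    Submodule.finrank_sup_add_finrank_inf_eq W (U m)
  have h2 : W ⊔ U m ≤ U (m+1) := sup_le hW (hU.2 m hm)
  have h3 : finrank F ↥(W ⊔ U m) ≤ finrank F ↥(U (m+1)) :=
    Submodule.finrank_mono h2
  have h4 : finrank F ↥(U (m+1)) = m + 2 := hU.1 (m+1) hm
  have h5 : finrank F ↥(U m) = m + 1 := hU.1 m (by omega)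
  omega

lemma BA.flag_descent [FiniteDimensional F V] {N : ℕ} {U : ℕ → Submodule F V}
    (hU : BA.IsFlag N U) (j : ℕ) :
    ∀ k (W : Submodule F V), j + k ≤ N → W ≤ U (j + k) →
      finrank F W ≤ finrank F ↥(W ⊓ U j) + k := by
  intro k
  induction k with
  | zero =>
    intro W h hW
    rw [inf_eq_left.mpr (by simpa using hW)]
    omega
  | succ n ih =>
    intro W h hW
    have hstep : finrank F W ≤ finrank F ↥(W ⊓ U (j + n)) + 1 := by
      have h' : W ≤ U (j + n + 1) := by
        rwa [show j + n + 1 = j + (n + 1) by ring]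
      exact BA.flag_step hU (m := j + n) (by omega) W h'
    have hW' : W ⊓ U (j + n) ≤ U (j + n) := inf_le_right
    have hrec := ih (W ⊓ U (j + n)) (by omega) hW'
    have heq : W ⊓ U (j + n) ⊓ U j = W ⊓ U j := by
      rw [inf_assoc, inf_eq_right.mpr (BA.flag_mono_s10 hU (by omega) (by omega))]
    rw [heq] at hrec
    omega

end Aux

/-- If `{U_i}, {U'_i}, {U''_i}` are totally opposite flags on an
`(N+1)`-dimensional vector space `V`, then for `r + s + t ≤ N` the subspace
`U_{N-r} ∩ U'_{N-s} ∩ U''_{N-t}` has dimension `N - r - s - t + 1`. -/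
theorem stmt10 {F V : Type*} [Field F] [AddCommGroup V] [Module F V] (N : ℕ)
    (hV : Module.finrank F V = N + 1) (U U' U'' : ℕ → Submodule F V)
    (hU : BA.IsFlag N U) (hU' : BA.IsFlag N U') (hU'' : BA.IsFlag N U'')
    (hT : BA.TotallyOpposite N U U' U'')
    (r s t : ℕ) (hrst : r + s + t ≤ N) :
    Module.finrank F ↥(U (N - r) ⊓ U' (N - s) ⊓ U'' (N - t)) =
      N - r - s - t + 1 := by
  have : FiniteDimensional F V := FiniteDimensional.of_finrank_pos (by omega)
  have hA : finrank F ↥(U (N - r)) = N - r + 1 := hU.1 _ (Nat.sub_le _ _)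
  have hB : finrank F ↥(U' (N - s)) = N - s + 1 := hU'.1 _ (Nat.sub_le _ _)
  have hC : finrank F ↥(U'' (N - t)) = N - t + 1 := hU''.1 _ (Nat.sub_le _ _)
  have e1 : finrank F ↥(U (N - r) ⊔ U' (N - s)) + finrank F ↥(U (N - r) ⊓ U' (N - s))
      = finrank F ↥(U (N - r)) + finrank F ↥(U' (N - s)) :=
    Submodule.finrank_sup_add_finrank_inf_eq _ _
  have e2 : finrank F ↥((U (N - r) ⊓ U' (N - s)) ⊔ U'' (N - t))
        + finrank F ↥(U (N - r) ⊓ U' (N - s) ⊓ U'' (N - t))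
      = finrank F ↥(U (N - r) ⊓ U' (N - s)) + finrank F ↥(U'' (N - t)) :=
    Submodule.finrank_sup_add_finrank_inf_eq _ _
  have l1 : finrank F ↥(U (N - r) ⊔ U' (N - s)) ≤ N + 1 := by
    rw [← hV]; exact Submodule.finrank_le _
  have l2 : finrank F ↥((U (N - r) ⊓ U' (N - s)) ⊔ U'' (N - t)) ≤ N + 1 := by
    rw [← hV]; exact Submodule.finrank_le _
  -- lower bound
  have lower : N - r - s - t + 1 ≤ finrank F ↥(U (N - r) ⊓ U' (N - s) ⊓ U'' (N - t)) := by
    omega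
  -- upper bound
  have upper : finrank F ↥(U (N - r) ⊓ U' (N - s) ⊓ U'' (N - t)) ≤ N - r - s - t + 1 := by
    set W := U (N - r) ⊓ U' (N - s) ⊓ U'' (N - t) with hWdef
    by_contra hu
    push_neg at hu
    by_cases h1 : 1 ≤ s + t
    · -- descend the first flag
      have hjk : (s + t - 1) + (N - r - s - t + 1) = N - r := by omega
      have hWle : W ≤ U ((s + t - 1) + (N - r - s - t + 1)) := by
        rw [hjk]; exact le_trans inf_le_left inf_le_left
      have hdes := BA.flag_descent hU (s + t - 1) (N - r - s - t + 1) W (by omega) hWle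
      have hbot : W ⊓ U (s + t - 1) = ⊥ := by
        have h0 := hT (N - s - t + 1) s t (by omega) (by omega) (by omega) (by omega)
        have hidx : N - (N - s - t + 1) = s + t - 1 := by omega
        rw [hidx] at h0
        refine le_bot_iff.mp ?_
        rw [← h0]
        exact le_inf (le_inf inf_le_right
          (le_trans inf_le_left (le_trans inf_le_left inf_le_right)))
          (le_trans inf_le_left inf_le_right)
      rw [hbot] at hdes
      rw [finrank_bot] at hdes
      omega
    · by_cases h2 : 1 ≤ r
      · -- s = t = 0, descend the second flag
        have hs : s = 0 := by omega
        have ht : t = 0 := by omega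
        subst hs ht
        have hjk : (r - 1) + (N - r + 1) = N - 0 := by omega
        have hWle : W ≤ U' ((r - 1) + (N - r + 1)) := by
          rw [hjk, hWdef]; exact le_trans inf_le_left inf_le_right
        have hdes := BA.flag_descent hU' (r - 1) (N - r + 1) W (by omega) hWle
        have hbot : W ⊓ U' (r - 1) = ⊥ := by
          have h0 := hT r (N - r + 1) 0 (by omega) (by omega) (by omega) (by omega)
          have hidx : N - (N - r + 1) = r - 1 := by omega
          rw [hidx] at h0
          refine le_bot_iff.mp ?_
          rw [← h0]
          exact le_inf (le_inf (le_trans inf_le_left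
            (le_trans inf_le_left inf_le_left)) inf_le_right)
            (le_trans inf_le_left inf_le_right)
        rw [hbot] at hdes
        rw [finrank_bot] at hdes
        omega
      · -- r = s = t = 0
        have hWle : finrank F W ≤ finrank F ↥(U'' (N - t)) :=
          Submodule.finrank_mono inf_le_right
        omega
  omega
end

section
/- Let F be a field, N a natural number, V an (N+1)-dimensional vector space over F, and B a Billiard Array on V. For 0 ≤ n ≤ N and η ∈ {1,2,3} define U^{(η)}_n to be the sum of the subspaces B_λ over all locations λ ∈ Δ_N whose η-coordinate is at least N − n. Then for each η ∈ {1,2,3} the sequence {U^{(η)}_n}_{n=0}^N is a flag on V, and the three flags {U^{(1)}_n}, {U^{(2)}_n}, {U^{(3)}_n} are totally opposite. -/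
/-- A line in `Δ_N`: the set of locations with a given `η`-coordinate `c`. -/
def BA.IsLine (N : ℕ) (L : Set (Fin 3 → ℕ)) : Prop :=
  ∃ (η : Fin 3) (c : ℕ), c ≤ N ∧ L = {v ∈ BA.Delta N | v η = c}

/-- A Billiard Array on `V`: a function assigning to each location of `Δ_N` a
one-dimensional subspace of `V`, such that the sum over each line is direct and
the sum over each black 3-clique is not direct. -/
def BA.IsBilliardArray {F V : Type*} [Field F] [AddCommGroup V] [Module F V]
    (N : ℕ) (B : (Fin 3 → ℕ) → Submodule F V) : Prop :=
  (∀ v ∈ BA.Delta N, Module.finrank F (B v) = 1) ∧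
  (∀ L : Set (Fin 3 → ℕ), BA.IsLine N L → iSupIndep fun x : L => B x.1) ∧
  (∀ r s t : ℕ, r + s + t + 1 = N → ¬ iSupIndep fun x : BA.blackSet r s t => B x.1)

/-- The sum of `B_λ` over locations `λ ∈ Δ_N` whose `η`-coordinate is at least
`N - n`. -/
def BA.flagOf {F V : Type*} [Field F] [AddCommGroup V] [Module F V]
    (N : ℕ) (B : (Fin 3 → ℕ) → Submodule F V) (η : Fin 3) (n : ℕ) :
    Submodule F V :=
  ⨆ v ∈ {w | w ∈ BA.Delta N ∧ N - n ≤ w η}, B v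

namespace BAProof

open Module Submodule

variable {F V : Type*} [Field F] [AddCommGroup V] [Module F V]

/-- sup of `B` over a set of locations. -/
def sp (B : (Fin 3 → ℕ) → Submodule F V) (S : Set (Fin 3 → ℕ)) : Submodule F V :=
  ⨆ v ∈ S, B v

variable {B : (Fin 3 → ℕ) → Submodule F V} {N : ℕ}

lemma le_sp {S : Set (Fin 3 → ℕ)} {v : Fin 3 → ℕ} (h : v ∈ S) : B v ≤ sp B S :=
  le_iSup₂ (f := fun w (_ : w ∈ S) => B w) v h

lemma sp_le {S : Set (Fin 3 → ℕ)} {X : Submodule F V} (h : ∀ v ∈ S, B v ≤ X) :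
    sp B S ≤ X := iSup₂_le h

lemma sp_mono {S S' : Set (Fin 3 → ℕ)} (h : S ⊆ S') : sp B S ≤ sp B S' :=
  sp_le fun v hv => le_sp (h hv)

lemma eta3 (v : Fin 3 → ℕ) : ![v 0, v 1, v 2] = v := by
  funext i; fin_cases i <;> rfl

lemma mem_delta {a b c : ℕ} (h : a + b + c = N) : ![a, b, c] ∈ BA.Delta N := h

lemma le_flag {η : Fin 3} {n : ℕ} {v : Fin 3 → ℕ} (hv : v ∈ BA.Delta N)
    (hc : N - n ≤ v η) : B v ≤ BA.flagOf N B η n :=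
  le_sp (S := {w | w ∈ BA.Delta N ∧ N - n ≤ w η}) ⟨hv, hc⟩

lemma flag_mono {η : Fin 3} {n m : ℕ} (h : n ≤ m) :
    BA.flagOf N B η n ≤ BA.flagOf N B η m :=
  sp_mono fun v hv => ⟨hv.1, le_trans (by omega) hv.2⟩

lemma pair_bot [FiniteDimensional F V] (hB : BA.IsBilliardArray N B)
    {v w : Fin 3 → ℕ} (hv : v ∈ BA.Delta N) (hw : w ∈ BA.Delta N)
    (hne : v ≠ w) (η : Fin 3) (hc : v η = w η) : B v ⊓ B w = ⊥ := by
  have hvsum : v 0 + v 1 + v 2 = N := hv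
  have hcN : v η ≤ N := by
    have : v η = v 0 ∨ v η = v 1 ∨ v η = v 2 := by fin_cases η <;> simp
    omega
  have hline : BA.IsLine N {u | u ∈ BA.Delta N ∧ u η = v η} := ⟨η, v η, hcN, rfl⟩
  have ind := hB.2.1 _ hline
  have hvL : v ∈ {u | u ∈ BA.Delta N ∧ u η = v η} := ⟨hv, rfl⟩
  have hwL : w ∈ {u | u ∈ BA.Delta N ∧ u η = v η} := ⟨hw, hc.symm⟩
  have hd := ind ⟨v, hvL⟩
  refine disjoint_iff.mp (hd.mono_right ?_)
  exact le_iSup₂ (f := fun (j : {u | u ∈ BA.Delta N ∧ u η = v η})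
      (_ : j ≠ ⟨v, hvL⟩) => B j.1) ⟨w, hwL⟩
    (fun hh => hne (congrArg Subtype.val hh).symm)

lemma le_of_inf_ne_bot [FiniteDimensional F V] {A Y : Submodule F V}
    (hA : finrank F A = 1) (h : A ⊓ Y ≠ ⊥) : A ≤ Y := by
  have h1 : 1 ≤ finrank F ↥(A ⊓ Y) := by
    rcases Nat.eq_zero_or_pos (finrank F ↥(A ⊓ Y)) with h0 | h0
    · exact absurd (Submodule.finrank_eq_zero.mp h0) h
    · exact h0
  have heq : A ⊓ Y = A :=
    Submodule.eq_of_le_of_finrank_le inf_le_left (by rw [hA]; exact h1)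
  exact heq ▸ inf_le_right

lemma tri [FiniteDimensional F V] {P Q R : Submodule F V}
    (hP : finrank F P = 1) (hQ : finrank F Q = 1) (hR : finrank F R = 1)
    (hPQ : P ⊓ Q = ⊥) (hPR : P ⊓ R = ⊥) (h : P ≤ Q ⊔ R) :
    Q ≤ P ⊔ R ∧ R ≤ P ⊔ Q := by
  have e1 : finrank F ↥(P ⊔ R) = 2 := by
    have := Submodule.finrank_sup_add_finrank_inf_eq P R
    rw [hPR, finrank_bot, hP, hR] at this; omega
  have e2 : finrank F ↥(P ⊔ Q) = 2 := by
    have := Submodule.finrank_sup_add_finrank_inf_eq P Q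
    rw [hPQ, finrank_bot, hP, hQ] at this; omega
  have e3 : finrank F ↥(Q ⊔ R) ≤ 2 := by
    have := Submodule.finrank_sup_add_finrank_inf_eq Q R
    rw [hQ, hR] at this; omega
  have l1 : P ⊔ R ≤ Q ⊔ R := sup_le h le_sup_right
  have l2 : P ⊔ Q ≤ Q ⊔ R := sup_le h le_sup_left
  have eq1 : P ⊔ R = Q ⊔ R := Submodule.eq_of_le_of_finrank_le l1 (by omega)
  have eq2 : P ⊔ Q = Q ⊔ R := Submodule.eq_of_le_of_finrank_le l2 (by omega)
  constructor
  · rw [eq1]; exact le_sup_left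
  · rw [eq2]; exact le_sup_right

lemma clique [FiniteDimensional F V] (hB : BA.IsBilliardArray N B)
    {r s t : ℕ} (h : r + s + t + 1 = N) :
    B ![r+1,s,t] ≤ B ![r,s+1,t] ⊔ B ![r,s,t+1] ∧
    B ![r,s+1,t] ≤ B ![r+1,s,t] ⊔ B ![r,s,t+1] ∧
    B ![r,s,t+1] ≤ B ![r+1,s,t] ⊔ B ![r,s+1,t] := by
  have hPd : ![r+1,s,t] ∈ BA.Delta N := mem_delta (by omega)
  have hQd : ![r,s+1,t] ∈ BA.Delta N := mem_delta (by omega)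
  have hRd : ![r,s,t+1] ∈ BA.Delta N := mem_delta (by omega)
  have dP := hB.1 _ hPd
  have dQ := hB.1 _ hQd
  have dR := hB.1 _ hRd
  have nPQ : ![r+1,s,t] ≠ ![r,s+1,t] := by
    intro hh; have := congrFun hh 0; simp at this
  have nPR : ![r+1,s,t] ≠ ![r,s,t+1] := by
    intro hh; have := congrFun hh 0; simp at this
  have nQR : ![r,s+1,t] ≠ ![r,s,t+1] := by
    intro hh; have := congrFun hh 1; simp at this
  have hPQ : B ![r+1,s,t] ⊓ B ![r,s+1,t] = ⊥ := pair_bot hB hPd hQd nPQ 2 rfl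
  have hPR : B ![r+1,s,t] ⊓ B ![r,s,t+1] = ⊥ := pair_bot hB hPd hRd nPR 1 rfl
  have hQR : B ![r,s+1,t] ⊓ B ![r,s,t+1] = ⊥ := pair_bot hB hQd hRd nQR 0 rfl
  have hni := hB.2.2 r s t h
  rw [iSupIndep_def] at hni
  push_neg at hni
  obtain ⟨x, hx⟩ := hni
  have hxm := x.2
  simp only [BA.blackSet, Set.mem_insert_iff, Set.mem_singleton_iff] at hxm
  rcases hxm with hxm | hxm | hxm
  case _ =>
    have hle : (⨆ (j : BA.blackSet r s t) (_ : j ≠ x), B j.1) ≤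
        B ![r,s+1,t] ⊔ B ![r,s,t+1] := by
      refine iSup₂_le fun j hj => ?_
      have hjm := j.2
      simp only [BA.blackSet, Set.mem_insert_iff, Set.mem_singleton_iff] at hjm
      rcases hjm with h' | h' | h'
      · exact absurd (Subtype.ext (h'.trans hxm.symm)) hj
      · rw [h']; exact le_sup_left
      · rw [h']; exact le_sup_right
    have hnd : ¬ Disjoint (B ![r+1,s,t]) (B ![r,s+1,t] ⊔ B ![r,s,t+1]) := by
      rw [← hxm]; exact fun d => hx (d.mono_right hle)
    have hPle : B ![r+1,s,t] ≤ B ![r,s+1,t] ⊔ B ![r,s,t+1] :=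
      le_of_inf_ne_bot dP (fun hbot => hnd (disjoint_iff.mpr hbot))
    obtain ⟨h2, h3⟩ := tri dP dQ dR hPQ hPR hPle
    exact ⟨hPle, h2, h3⟩
  case _ =>
    have hle : (⨆ (j : BA.blackSet r s t) (_ : j ≠ x), B j.1) ≤
        B ![r+1,s,t] ⊔ B ![r,s,t+1] := by
      refine iSup₂_le fun j hj => ?_
      have hjm := j.2
      simp only [BA.blackSet, Set.mem_insert_iff, Set.mem_singleton_iff] at hjm
      rcases hjm with h' | h' | h'
      · rw [h']; exact le_sup_left
      · exact absurd (Subtype.ext (h'.trans hxm.symm)) hj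
      · rw [h']; exact le_sup_right
    have hnd : ¬ Disjoint (B ![r,s+1,t]) (B ![r+1,s,t] ⊔ B ![r,s,t+1]) := by
      rw [← hxm]; exact fun d => hx (d.mono_right hle)
    have hQle : B ![r,s+1,t] ≤ B ![r+1,s,t] ⊔ B ![r,s,t+1] :=
      le_of_inf_ne_bot dQ (fun hbot => hnd (disjoint_iff.mpr hbot))
    have hQP : B ![r,s+1,t] ⊓ B ![r+1,s,t] = ⊥ := by rwa [inf_comm] at hPQ
    obtain ⟨h2, h3⟩ := tri dQ dP dR hQP hQR hQle
    refine ⟨h2, hQle, ?_⟩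
    rwa [sup_comm] at h3
  case _ =>
    have hle : (⨆ (j : BA.blackSet r s t) (_ : j ≠ x), B j.1) ≤
        B ![r+1,s,t] ⊔ B ![r,s+1,t] := by
      refine iSup₂_le fun j hj => ?_
      have hjm := j.2
      simp only [BA.blackSet, Set.mem_insert_iff, Set.mem_singleton_iff] at hjm
      rcases hjm with h' | h' | h'
      · rw [h']; exact le_sup_left
      · rw [h']; exact le_sup_right
      · exact absurd (Subtype.ext (h'.trans hxm.symm)) hj
    have hnd : ¬ Disjoint (B ![r,s,t+1]) (B ![r+1,s,t] ⊔ B ![r,s+1,t]) := by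
      rw [← hxm]; exact fun d => hx (d.mono_right hle)
    have hRle : B ![r,s,t+1] ≤ B ![r+1,s,t] ⊔ B ![r,s+1,t] :=
      le_of_inf_ne_bot dR (fun hbot => hnd (disjoint_iff.mpr hbot))
    have hRP : B ![r,s,t+1] ⊓ B ![r+1,s,t] = ⊥ := by rwa [inf_comm] at hPR
    have hRQ : B ![r,s,t+1] ⊓ B ![r,s+1,t] = ⊥ := by rwa [inf_comm] at hQR
    obtain ⟨h2, h3⟩ := tri dR dP dQ hRP hRQ hRle
    refine ⟨?_, ?_, hRle⟩
    · rwa [sup_comm] at h2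
    · rwa [sup_comm] at h3



lemma collapse0 [FiniteDimensional F V] (hB : BA.IsBilliardArray N B) {c : ℕ} :
    ∀ k a b c2, a + b + c2 = N → c ≤ a → a - c ≤ k →
      B ![a, b, c2] ≤ sp B {v | v ∈ BA.Delta N ∧ v 0 = c} := by
  intro k
  induction k with
  | zero =>
    intro a b c2 hsum hca hk
    obtain rfl : a = c := by omega
    exact le_sp ⟨mem_delta hsum, rfl⟩
  | succ k ih =>
    intro a b c2 hsum hca hk
    by_cases hac : a = c
    · subst hac; exact le_sp ⟨mem_delta hsum, rfl⟩
    · obtain ⟨a', rfl⟩ : ∃ a', a = a' + 1 := ⟨a - 1, by omega⟩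
      have hcl := (clique hB (r := a') (s := b) (t := c2) (by omega)).1
      exact hcl.trans (sup_le (ih a' (b+1) c2 (by omega) (by omega) (by omega))
        (ih a' b (c2+1) (by omega) (by omega) (by omega)))

lemma collapse1 [FiniteDimensional F V] (hB : BA.IsBilliardArray N B) {c : ℕ} :
    ∀ k a b c2, a + b + c2 = N → c ≤ b → b - c ≤ k →
      B ![a, b, c2] ≤ sp B {v | v ∈ BA.Delta N ∧ v 1 = c} := by
  intro k
  induction k with
  | zero =>
    intro a b c2 hsum hca hk
    obtain rfl : b = c := by omega
    exact le_sp ⟨mem_delta hsum, rfl⟩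
  | succ k ih =>
    intro a b c2 hsum hca hk
    by_cases hac : b = c
    · subst hac; exact le_sp ⟨mem_delta hsum, rfl⟩
    · obtain ⟨b', rfl⟩ : ∃ b', b = b' + 1 := ⟨b - 1, by omega⟩
      have hcl := (clique hB (r := a) (s := b') (t := c2) (by omega)).2.1
      exact hcl.trans (sup_le (ih (a+1) b' c2 (by omega) (by omega) (by omega))
        (ih a b' (c2+1) (by omega) (by omega) (by omega)))

lemma collapse2 [FiniteDimensional F V] (hB : BA.IsBilliardArray N B) {c : ℕ} :
    ∀ k a b c2, a + b + c2 = N → c ≤ c2 → c2 - c ≤ k →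
      B ![a, b, c2] ≤ sp B {v | v ∈ BA.Delta N ∧ v 2 = c} := by
  intro k
  induction k with
  | zero =>
    intro a b c2 hsum hca hk
    obtain rfl : c2 = c := by omega
    exact le_sp ⟨mem_delta hsum, rfl⟩
  | succ k ih =>
    intro a b c2 hsum hca hk
    by_cases hac : c2 = c
    · subst hac; exact le_sp ⟨mem_delta hsum, rfl⟩
    · obtain ⟨c2', rfl⟩ : ∃ c2', c2 = c2' + 1 := ⟨c2 - 1, by omega⟩
      have hcl := (clique hB (r := a) (s := b) (t := c2') (by omega)).2.2
      exact hcl.trans (sup_le (ih (a+1) b c2' (by omega) (by omega) (by omega))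
        (ih a (b+1) c2' (by omega) (by omega) (by omega)))

lemma flag_eq_line [FiniteDimensional F V] (hB : BA.IsBilliardArray N B)
    (η : Fin 3) {n : ℕ} (hn : n ≤ N) :
    BA.flagOf N B η n = sp B {v | v ∈ BA.Delta N ∧ v η = N - n} := by
  apply le_antisymm
  · refine sp_le (S := {w | w ∈ BA.Delta N ∧ N - n ≤ w η}) fun v hv => ?_
    obtain ⟨hvd, hvc⟩ := hv
    have hsum : v 0 + v 1 + v 2 = N := hvd
    rw [← eta3 v]
    fin_cases η
    · have hvc' : N - n ≤ v 0 := hvc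
      exact collapse0 hB (v 0 - (N - n)) (v 0) (v 1) (v 2) hsum hvc' le_rfl
    · have hvc' : N - n ≤ v 1 := hvc
      exact collapse1 hB (v 1 - (N - n)) (v 0) (v 1) (v 2) hsum hvc' le_rfl
    · have hvc' : N - n ≤ v 2 := hvc
      exact collapse2 hB (v 2 - (N - n)) (v 0) (v 1) (v 2) hsum hvc' le_rfl
  · exact sp_mono fun v hv => ⟨hv.1, le_of_eq hv.2.symm⟩



lemma finrank_sp_of_param [FiniteDimensional F V] (hB : BA.IsBilliardArray N B)
    {L : Set (Fin 3 → ℕ)} (hLine : BA.IsLine N L) (hLd : ∀ v ∈ L, v ∈ BA.Delta N)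
    {n : ℕ} (e : Fin n → (Fin 3 → ℕ)) (he : ∀ i, e i ∈ L)
    (hsur : ∀ v ∈ L, ∃ i, e i = v) (hinj : Function.Injective e) :
    finrank F (sp B L) = n := by
  classical
  have hgen : ∀ v : Fin 3 → ℕ, ∃ x : V, v ∈ BA.Delta N → (x ≠ 0 ∧ B v = span F {x}) := by
    intro v
    by_cases hv : v ∈ BA.Delta N
    · have h1 : finrank F (B v) = 1 := hB.1 v hv
      have hbot : B v ≠ ⊥ := by
        intro hb; rw [hb, finrank_bot] at h1; omega
      obtain ⟨x, hxB, hx0⟩ := (Submodule.ne_bot_iff _).mp hbot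
      refine ⟨x, fun _ => ⟨hx0, ?_⟩⟩
      have hle : span F {x} ≤ B v := (span_singleton_le_iff_mem _ _).mpr hxB
      exact (Submodule.eq_of_le_of_finrank_le hle
        (by rw [finrank_span_singleton hx0, h1])).symm
    · exact ⟨0, fun h => absurd h hv⟩
  choose g hg using hgen
  have ind := hB.2.1 L hLine
  have hli0 : LinearIndependent F (fun x : L => g x.1) := by
    refine iSupIndep.linearIndependent _ ind (fun x => ?_) (fun x => (hg x.1 (hLd x.1 x.2)).1)
    rw [(hg x.1 (hLd x.1 x.2)).2]
    exact mem_span_singleton_self _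
  have hinj' : Function.Injective (fun i : Fin n => (⟨e i, he i⟩ : L)) :=
    fun i j hij => hinj (congrArg Subtype.val hij)
  have hli : LinearIndependent F (fun i : Fin n => g (e i)) := hli0.comp _ hinj'
  have hspan : sp B L = span F (Set.range fun i : Fin n => g (e i)) := by
    apply le_antisymm
    · refine sp_le fun v hv => ?_
      obtain ⟨i, rfl⟩ := hsur v hv
      rw [(hg _ (hLd _ (he i))).2]
      refine span_mono ?_
      simp only [Set.singleton_subset_iff]
      exact ⟨i, rfl⟩
    · rw [span_le]
      rintro y ⟨i, rfl⟩
      refine le_sp (he i) ?_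
      rw [(hg _ (hLd _ (he i))).2]
      exact mem_span_singleton_self _
  rw [hspan, finrank_span_eq_card hli]
  exact Fintype.card_fin n

lemma finrank_sp_line [FiniteDimensional F V] (hB : BA.IsBilliardArray N B)
    (η : Fin 3) {c : ℕ} (hc : c ≤ N) :
    finrank F (sp B {v | v ∈ BA.Delta N ∧ v η = c}) = N - c + 1 := by
  fin_cases η
  · refine finrank_sp_of_param hB ⟨0, c, hc, rfl⟩ (fun v hv => hv.1)
      (fun i : Fin (N - c + 1) => ![c, i.1, N - c - i.1])
      (fun i => ⟨mem_delta (by have := i.isLt; omega), rfl⟩) (fun v hv => ?_)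
      (fun i j hij => ?_)
    · have hd : v 0 + v 1 + v 2 = N := hv.1
      have h0 : v 0 = c := hv.2
      refine ⟨⟨v 1, by omega⟩, ?_⟩
      have h2 : v 2 = N - c - v 1 := by omega
      show ![c, v 1, N - c - v 1] = v
      rw [← h2, ← h0]
      exact eta3 v
    · have := congrFun hij 1
      simp only [Matrix.cons_val_one, Matrix.head_cons] at this
      exact Fin.ext this
  · refine finrank_sp_of_param hB ⟨1, c, hc, rfl⟩ (fun v hv => hv.1)
      (fun i : Fin (N - c + 1) => ![i.1, c, N - c - i.1])
      (fun i => ⟨mem_delta (by have := i.isLt; omega), rfl⟩) (fun v hv => ?_)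
      (fun i j hij => ?_)
    · have hd : v 0 + v 1 + v 2 = N := hv.1
      have h0 : v 1 = c := hv.2
      refine ⟨⟨v 0, by omega⟩, ?_⟩
      have h2 : v 2 = N - c - v 0 := by omega
      show ![v 0, c, N - c - v 0] = v
      rw [← h2, ← h0]
      exact eta3 v
    · have := congrFun hij 0
      simp only [Matrix.cons_val_zero] at this
      exact Fin.ext this
  · refine finrank_sp_of_param hB ⟨2, c, hc, rfl⟩ (fun v hv => hv.1)
      (fun i : Fin (N - c + 1) => ![i.1, N - c - i.1, c])
      (fun i => ⟨mem_delta (by have := i.isLt; omega), rfl⟩) (fun v hv => ?_)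
      (fun i j hij => ?_)
    · have hd : v 0 + v 1 + v 2 = N := hv.1
      have h0 : v 2 = c := hv.2
      refine ⟨⟨v 0, by omega⟩, ?_⟩
      have h2 : v 1 = N - c - v 0 := by omega
      show ![v 0, N - c - v 0, c] = v
      rw [← h2, ← h0]
      exact eta3 v
    · have := congrFun hij 0
      simp only [Matrix.cons_val_zero] at this
      exact Fin.ext this

lemma flag_finrank [FiniteDimensional F V] (hB : BA.IsBilliardArray N B)
    (η : Fin 3) {n : ℕ} (hn : n ≤ N) :
    finrank F (BA.flagOf N B η n) = n + 1 := by
  rw [flag_eq_line hB η hn, finrank_sp_line hB η (by omega : N - n ≤ N)]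
  omega

lemma flagTop [FiniteDimensional F V] (hB : BA.IsBilliardArray N B)
    (hV : finrank F V = N + 1) (η : Fin 3) : BA.flagOf N B η N = ⊤ :=
  Submodule.eq_top_of_finrank_eq (by rw [flag_finrank hB η le_rfl, hV])

lemma top_of_forall [FiniteDimensional F V] (hB : BA.IsBilliardArray N B)
    (hV : finrank F V = N + 1) {X : Submodule F V}
    (h : ∀ v ∈ BA.Delta N, B v ≤ X) : X = ⊤ := by
  have h1 : BA.flagOf N B 0 N ≤ X :=
    sp_le (S := {w | w ∈ BA.Delta N ∧ N - N ≤ w 0}) fun v hv => h v hv.1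
  rw [flagTop hB hV] at h1
  exact top_le_iff.mp h1



lemma masterSup [FiniteDimensional F V] (hB : BA.IsBilliardArray N B)
    (hV : finrank F V = N + 1) {r s : ℕ} (hr : r ≤ N) (hs : s ≤ N)
    (hrs : r + s ≤ N + 1) :
    BA.flagOf N B 0 (N - r) ⊔ BA.flagOf N B 1 (N - s) = ⊤ := by
  apply top_of_forall hB hV
  have key : ∀ c2 a b, a + b + c2 = N →
      B ![a, b, c2] ≤ BA.flagOf N B 0 (N - r) ⊔ BA.flagOf N B 1 (N - s) := by
    intro c2
    induction c2 with
    | zero =>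
      intro a b hsum
      rcases le_or_gt r a with h | h
      · refine le_trans (le_flag (mem_delta hsum) ?_) le_sup_left
        show N - (N - r) ≤ a
        omega
      · refine le_trans (le_flag (mem_delta hsum) ?_) le_sup_right
        show N - (N - s) ≤ b
        omega
    | succ c2 ih =>
      intro a b hsum
      exact ((clique hB (r := a) (s := b) (t := c2) (by omega)).2.2).trans
        (sup_le (ih (a+1) b (by omega)) (ih a (b+1) (by omega)))
  intro v hv
  have hsum : v 0 + v 1 + v 2 = N := hv
  rw [← eta3 v]
  exact key (v 2) (v 0) (v 1) hsum

lemma TSup [FiniteDimensional F V] (hB : BA.IsBilliardArray N B)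
    (hV : finrank F V = N + 1) {r s t : ℕ} (hsum0 : r + s + t = N + 1)
    (hr : r ≤ N) (hs : s ≤ N) (ht : t ≤ N) :
    sp B {v | v ∈ BA.Delta N ∧ r ≤ v 0 ∧ s ≤ v 1} ⊔ BA.flagOf N B 2 (N - t) = ⊤ := by
  apply top_of_forall hB hV
  set S := sp B {v | v ∈ BA.Delta N ∧ r ≤ v 0 ∧ s ≤ v 1} ⊔ BA.flagOf N B 2 (N - t)
    with hS
  have hU3 : ∀ a b c2, a + b + c2 = N → t ≤ c2 → B ![a, b, c2] ≤ S := by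
    intro a b c2 hd h
    refine le_trans (le_flag (mem_delta hd) ?_) le_sup_right
    show N - (N - t) ≤ c2
    omega
  have hT : ∀ a b c2, a + b + c2 = N → r ≤ a → s ≤ b → B ![a, b, c2] ≤ S := by
    intro a b c2 hd h1 h2
    refine le_trans (le_sp (S := {v | v ∈ BA.Delta N ∧ r ≤ v 0 ∧ s ≤ v 1}) ?_) le_sup_left
    exact ⟨mem_delta hd, h1, h2⟩
  have key : ∀ k1 k2 a b c2, a + b + c2 = N → t - c2 ≤ k1 →
      (a - r) + (r - a) ≤ k2 → B ![a, b, c2] ≤ S := by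
    intro k1
    induction k1 with
    | zero =>
      intro k2 a b c2 hd h1 h2
      exact hU3 a b c2 hd (by omega)
    | succ k1 ih1 =>
      intro k2
      induction k2 with
      | zero =>
        intro a b c2 hd h1 h2
        by_cases hc : t ≤ c2
        · exact hU3 a b c2 hd hc
        · have har : a = r := by omega
          have hbs : s ≤ b := by omega
          exact hT a b c2 hd (by omega) hbs
      | succ k2 ih2 =>
        intro a b c2 hd h1 h2
        by_cases hc : t ≤ c2
        · exact hU3 a b c2 hd hc
        · rcases le_or_gt r a with hra | hra
          · by_cases hsb : s ≤ b
            · exact hT a b c2 hd hra hsb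
            · -- b < s, so a ≥ r + 1
              have ha1 : r + 1 ≤ a := by omega
              obtain ⟨a', rfl⟩ : ∃ a', a = a' + 1 := ⟨a - 1, by omega⟩
              have hcl := (clique hB (r := a') (s := b) (t := c2) (by omega)).1
              refine hcl.trans (sup_le ?_ ?_)
              · exact ih2 a' (b+1) c2 (by omega) (by omega) (by omega)
              · exact ih1 ((a' - r) + (r - a')) a' b (c2+1) (by omega) (by omega) le_rfl
          · -- a < r, so b ≥ s + 1
            have hb1 : s + 1 ≤ b := by omega
            obtain ⟨b', rfl⟩ : ∃ b', b = b' + 1 := ⟨b - 1, by omega⟩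
            have hcl := (clique hB (r := a) (s := b') (t := c2) (by omega)).2.1
            refine hcl.trans (sup_le ?_ ?_)
            · exact ih2 (a+1) b' c2 (by omega) (by omega) (by omega)
            · exact ih1 ((a - r) + (r - a)) a b' (c2+1) (by omega) (by omega) le_rfl
  intro v hv
  have hsum : v 0 + v 1 + v 2 = N := hv
  rw [← eta3 v]
  exact key (t - v 2) ((v 0 - r) + (r - v 0)) (v 0) (v 1) (v 2) hsum le_rfl le_rfl

lemma triple [FiniteDimensional F V] (hB : BA.IsBilliardArray N B)
    (hV : finrank F V = N + 1) {r s t : ℕ} (hsum : r + s + t = N + 1)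
    (hr : r ≤ N) (hs : s ≤ N) (ht : t ≤ N) :
    BA.flagOf N B 0 (N - r) ⊓ BA.flagOf N B 1 (N - s) ⊓ BA.flagOf N B 2 (N - t) = ⊥ := by
  set U1 := BA.flagOf N B 0 (N - r) with hU1
  set U2 := BA.flagOf N B 1 (N - s) with hU2
  set U3 := BA.flagOf N B 2 (N - t) with hU3
  have d1 : finrank F U1 = (N - r) + 1 := flag_finrank hB 0 (by omega)
  have d2 : finrank F U2 = (N - s) + 1 := flag_finrank hB 1 (by omega)
  have d3 : finrank F U3 = (N - t) + 1 := flag_finrank hB 2 (by omega)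
  have hsup : U1 ⊔ U2 = ⊤ := masterSup hB hV hr hs (by omega)
  have e12 : finrank F ↥(U1 ⊓ U2) = t := by
    have h := Submodule.finrank_sup_add_finrank_inf_eq U1 U2
    rw [hsup, finrank_top, hV, d1, d2] at h
    omega
  set T : Set (Fin 3 → ℕ) := {v | v ∈ BA.Delta N ∧ r ≤ v 0 ∧ s ≤ v 1} with hT
  have hT12 : sp B T ≤ U1 ⊓ U2 := by
    refine le_inf (sp_le fun v hv => le_flag hv.1 ?_) (sp_le fun v hv => le_flag hv.1 ?_)
    · have := hv.2.1; omega
    · have := hv.2.2; omega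
  have hTsup : sp B T ⊔ U3 = ⊤ := TSup hB hV hsum hr hs ht
  have e := Submodule.finrank_sup_add_finrank_inf_eq (sp B T) U3
  rw [hTsup, finrank_top, hV, d3] at e
  have hx : finrank F (sp B T) ≤ t := e12 ▸ Submodule.finrank_mono hT12
  have hx' : finrank F (sp B T) = t ∧ finrank F ↥(sp B T ⊓ U3) = 0 := by omega
  have hEq : sp B T = U1 ⊓ U2 :=
    Submodule.eq_of_le_of_finrank_le hT12 (by rw [e12, hx'.1])
  rw [← hEq]
  exact Submodule.finrank_eq_zero.mp hx'.2

end BAProof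


/-- For a Billiard Array `B` on an `(N+1)`-dimensional vector space `V`, the
three sequences `{U^{(η)}_n}_{n=0}^N` (where `U^{(η)}_n` is the sum of the
`B_λ` with `η`-coordinate at least `N-n`) are flags on `V`, and these three
flags are totally opposite. -/
theorem stmt12 {F V : Type*} [Field F] [AddCommGroup V] [Module F V] (N : ℕ)
    (hV : Module.finrank F V = N + 1) (B : (Fin 3 → ℕ) → Submodule F V)
    (hB : BA.IsBilliardArray N B) :
    (∀ η : Fin 3, BA.IsFlag N (BA.flagOf N B η)) ∧
      BA.TotallyOpposite N (BA.flagOf N B 0) (BA.flagOf N B 1)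
        (BA.flagOf N B 2) := by
  haveI : FiniteDimensional F V := FiniteDimensional.of_finrank_pos (by omega)
  constructor
  · intro η
    exact ⟨fun i hi => BAProof.flag_finrank hB η hi,
      fun i hi => BAProof.flag_mono (by omega)⟩
  · intro r s t hr hs ht hlt
    obtain ⟨r', s', t', h1, h2, h3, h4, h5, h6, h7⟩ :
        ∃ r' s' t', r' ≤ r ∧ s' ≤ s ∧ t' ≤ t ∧ r' ≤ N ∧ s' ≤ N ∧ t' ≤ N ∧
          r' + s' + t' = N + 1 :=
      ⟨r, min s (N + 1 - r), N + 1 - r - min s (N + 1 - r), by omega, by omega,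
        by omega, by omega, by omega, by omega, by omega⟩
    have hb := BAProof.triple hB hV h7 h4 h5 h6
    refine le_bot_iff.mp (le_trans ?_ hb.le)
    exact inf_le_inf (inf_le_inf (BAProof.flag_mono (by omega))
      (BAProof.flag_mono (by omega))) (BAProof.flag_mono (by omega))
end

section
/- Let F be a field, N a natural number, V an (N+1)-dimensional vector space over F, and B a Billiard Array on V. Pick natural numbers r, s, t with r, s, t ≤ N, and let S_1 (resp. S_2, resp. S_3) denote the sum of the subspaces B_λ over all λ ∈ Δ_N whose first (resp. second, resp. third) coordinate is at least r (resp. s, resp. t). If r + s + t > N then S_1 ∩ S_2 ∩ S_3 = 0. If r + s + t ≤ N then S_1 ∩ S_2 ∩ S_3 equals the sum of the subspaces B_λ over all λ ∈ Δ_N with λ ≥ (r,s,t) componentwise. -/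
open Submodule Module

namespace BAaux

variable {F V : Type*} [Field F] [AddCommGroup V] [Module F V]

lemma mem_delta {N : ℕ} {a b c : ℕ} (h : a + b + c = N) :
    (![a, b, c] : Fin 3 → ℕ) ∈ BA.Delta N := by
  simp only [BA.Delta, Set.mem_setOf_eq, Matrix.cons_val_zero, Matrix.cons_val_one,
    Matrix.head_cons, Matrix.cons_val_two, Matrix.tail_cons]
  exact h

lemma vec_eq (w : Fin 3 → ℕ) : w = ![w 0, w 1, w 2] := by
  funext i
  fin_cases i <;> simp

lemma span_eq_of_mem [FiniteDimensional F V] {p : Submodule F V} (hp : finrank F p = 1)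
    {x : V} (hx : x ∈ p) (hx0 : x ≠ 0) : span F {x} = p :=
  Submodule.eq_of_le_of_finrank_eq ((span_singleton_le_iff_mem x p).2 hx)
    (by rw [finrank_span_singleton hx0, hp])

lemma ne_bot_of_one {p : Submodule F V} (hp : finrank F p = 1) : p ≠ ⊥ := by
  intro h
  rw [h, finrank_bot] at hp
  omega

lemma one_dim_le [FiniteDimensional F V] {p q : Submodule F V} (hp : finrank F p = 1)
    (h : ¬ Disjoint p q) : p ≤ q := by
  rw [disjoint_iff] at h
  obtain ⟨v, hv, hv0⟩ := (Submodule.ne_bot_iff _).1 h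
  obtain ⟨hvp, hvq⟩ := Submodule.mem_inf.1 hv
  rw [← span_eq_of_mem hp hvp hv0, span_singleton_le_iff_mem]
  exact hvq

lemma three_lemma [FiniteDimensional F V] {p q r : Submodule F V}
    (hq1 : finrank F q = 1) (hpr : Disjoint p r) (hp : p ≠ ⊥) (h : p ≤ q ⊔ r) :
    q ≤ p ⊔ r := by
  obtain ⟨v, hv, hv0⟩ := (Submodule.ne_bot_iff p).1 hp
  obtain ⟨u, hu, w, hw, huw⟩ := Submodule.mem_sup.1 (h hv)
  have hu0 : u ≠ 0 := by
    rintro rfl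
    rw [zero_add] at huw
    exact hv0 ((Submodule.mem_bot F).1 (hpr.le_bot ⟨hv, huw ▸ hw⟩))
  rw [← span_eq_of_mem hq1 hu hu0, span_singleton_le_iff_mem]
  exact Submodule.mem_sup.2 ⟨v, hv, -w, neg_mem hw, by rw [← huw]; abel⟩

lemma disj {N : ℕ} {B : (Fin 3 → ℕ) → Submodule F V} (hB : BA.IsBilliardArray N B)
    {u v : Fin 3 → ℕ} (hu : u ∈ BA.Delta N) (hv : v ∈ BA.Delta N) (η : Fin 3)
    (hc : u η ≤ N) (h : u η = v η) (hne : u ≠ v) : Disjoint (B u) (B v) := by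
  have hline : BA.IsLine N {w ∈ BA.Delta N | w η = u η} := ⟨η, u η, hc, rfl⟩
  have hind := hB.2.1 _ hline
  have hne' : (⟨u, ⟨hu, rfl⟩⟩ : {w // w ∈ {w ∈ BA.Delta N | w η = u η}}) ≠ ⟨v, ⟨hv, h.symm⟩⟩ :=
    fun hEq => hne (congrArg Subtype.val hEq)
  exact hind.pairwiseDisjoint hne'

lemma clique [FiniteDimensional F V]
    {N : ℕ} {B : (Fin 3 → ℕ) → Submodule F V} (hB : BA.IsBilliardArray N B)
    {a b c : ℕ} (h : a + b + c + 1 = N) :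
    B ![a+1,b,c] ≤ B ![a,b+1,c] ⊔ B ![a,b,c+1] ∧
    B ![a,b+1,c] ≤ B ![a+1,b,c] ⊔ B ![a,b,c+1] ∧
    B ![a,b,c+1] ≤ B ![a+1,b,c] ⊔ B ![a,b+1,c] := by
  have m1 : (![a+1,b,c] : Fin 3 → ℕ) ∈ BA.Delta N := mem_delta (by omega)
  have m2 : (![a,b+1,c] : Fin 3 → ℕ) ∈ BA.Delta N := mem_delta (by omega)
  have m3 : (![a,b,c+1] : Fin 3 → ℕ) ∈ BA.Delta N := mem_delta (by omega)
  have f1 : finrank F (B ![a+1,b,c]) = 1 := hB.1 _ m1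
  have f2 : finrank F (B ![a,b+1,c]) = 1 := hB.1 _ m2
  have f3 : finrank F (B ![a,b,c+1]) = 1 := hB.1 _ m3
  have ne12 : (![a+1,b,c] : Fin 3 → ℕ) ≠ ![a,b+1,c] := by
    intro hE; have := congrFun hE 0; simp at this
  have ne13 : (![a+1,b,c] : Fin 3 → ℕ) ≠ ![a,b,c+1] := by
    intro hE; have := congrFun hE 0; simp at this
  have ne23 : (![a,b+1,c] : Fin 3 → ℕ) ≠ ![a,b,c+1] := by
    intro hE; have := congrFun hE 1; simp at this
  have d12 : Disjoint (B ![a+1,b,c]) (B ![a,b+1,c]) :=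
    disj hB m1 m2 2 (by simp; omega) (by simp) ne12
  have d13 : Disjoint (B ![a+1,b,c]) (B ![a,b,c+1]) :=
    disj hB m1 m3 1 (by simp; omega) (by simp) ne13
  have d23 : Disjoint (B ![a,b+1,c]) (B ![a,b,c+1]) :=
    disj hB m2 m3 0 (by simp; omega) (by simp) ne23
  have hni := hB.2.2 a b c h
  simp only [iSupIndep] at hni
  push_neg at hni
  obtain ⟨⟨x, hx⟩, hndis⟩ := hni
  simp only [BA.blackSet, Set.mem_insert_iff, Set.mem_singleton_iff] at hx
  have hm1 : (![a+1,b,c] : Fin 3 → ℕ) ∈ BA.blackSet a b c := Set.mem_insert _ _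
  have hm2 : (![a,b+1,c] : Fin 3 → ℕ) ∈ BA.blackSet a b c :=
    Set.mem_insert_of_mem _ (Set.mem_insert _ _)
  have hm3 : (![a,b,c+1] : Fin 3 → ℕ) ∈ BA.blackSet a b c :=
    Set.mem_insert_of_mem _ (Set.mem_insert_of_mem _ rfl)
  rcases hx with rfl | rfl | rfl
  · have hb : (⨆ (j : BA.blackSet a b c) (_ : j ≠ ⟨_, hm1⟩), B j.1) ≤
        B ![a,b+1,c] ⊔ B ![a,b,c+1] := by
      refine iSup_le fun j => iSup_le fun hj => ?_
      obtain ⟨z, hz⟩ := j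
      simp only [BA.blackSet, Set.mem_insert_iff, Set.mem_singleton_iff] at hz
      rcases hz with rfl | rfl | rfl
      · exact absurd (Subtype.ext rfl) hj
      · exact le_sup_left
      · exact le_sup_right
    have h1 : B ![a+1,b,c] ≤ B ![a,b+1,c] ⊔ B ![a,b,c+1] :=
      one_dim_le f1 (fun hd => hndis (hd.mono_right hb))
    exact ⟨h1, three_lemma f2 d13 (ne_bot_of_one f1) h1,
      three_lemma f3 d12 (ne_bot_of_one f1) (h1.trans (sup_comm _ _).le)⟩
  · have hb : (⨆ (j : BA.blackSet a b c) (_ : j ≠ ⟨_, hm2⟩), B j.1) ≤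
        B ![a+1,b,c] ⊔ B ![a,b,c+1] := by
      refine iSup_le fun j => iSup_le fun hj => ?_
      obtain ⟨z, hz⟩ := j
      simp only [BA.blackSet, Set.mem_insert_iff, Set.mem_singleton_iff] at hz
      rcases hz with rfl | rfl | rfl
      · exact le_sup_left
      · exact absurd (Subtype.ext rfl) hj
      · exact le_sup_right
    have h2 : B ![a,b+1,c] ≤ B ![a+1,b,c] ⊔ B ![a,b,c+1] :=
      one_dim_le f2 (fun hd => hndis (hd.mono_right hb))
    have h1 : B ![a+1,b,c] ≤ B ![a,b+1,c] ⊔ B ![a,b,c+1] :=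
      three_lemma f1 d23 (ne_bot_of_one f2) h2
    exact ⟨h1, h2, three_lemma f3 d12 (ne_bot_of_one f1) (h1.trans (sup_comm _ _).le)⟩
  · have hb : (⨆ (j : BA.blackSet a b c) (_ : j ≠ ⟨_, hm3⟩), B j.1) ≤
        B ![a+1,b,c] ⊔ B ![a,b+1,c] := by
      refine iSup_le fun j => iSup_le fun hj => ?_
      obtain ⟨z, hz⟩ := j
      simp only [BA.blackSet, Set.mem_insert_iff, Set.mem_singleton_iff] at hz
      rcases hz with rfl | rfl | rfl
      · exact le_sup_left
      · exact le_sup_right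
      · exact absurd (Subtype.ext rfl) hj
    have h3 : B ![a,b,c+1] ≤ B ![a+1,b,c] ⊔ B ![a,b+1,c] :=
      one_dim_le f3 (fun hd => hndis (hd.mono_right hb))
    have h1 : B ![a+1,b,c] ≤ B ![a,b+1,c] ⊔ B ![a,b,c+1] :=
      (three_lemma f1 d23.symm (ne_bot_of_one f3) h3).trans (sup_comm _ _).le
    exact ⟨h1, three_lemma f2 d13 (ne_bot_of_one f1) h1, h3⟩

end BAaux

open BAaux in
/-- For a Billiard Array `B` on `V` and `r, s, t ≤ N`, let `S₁` (resp. `S₂`,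
`S₃`) be the sum of the `B_λ` over locations `λ` whose first (resp. second,
third) coordinate is at least `r` (resp. `s`, `t`). If `r + s + t > N` then
`S₁ ∩ S₂ ∩ S₃ = 0`; if `r + s + t ≤ N` then `S₁ ∩ S₂ ∩ S₃` equals the sum of
the `B_λ` over the locations `λ ≥ (r,s,t)` componentwise. -/


theorem stmt13 {F V : Type*} [Field F] [AddCommGroup V] [Module F V] (N : ℕ)
    (hV : Module.finrank F V = N + 1) (B : (Fin 3 → ℕ) → Submodule F V)
    (hB : BA.IsBilliardArray N B)
    (r s t : ℕ) (hr : r ≤ N) (hs : s ≤ N) (ht : t ≤ N) :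
    (N < r + s + t →
      (⨆ v ∈ {w | w ∈ BA.Delta N ∧ r ≤ w 0}, B v) ⊓
        (⨆ v ∈ {w | w ∈ BA.Delta N ∧ s ≤ w 1}, B v) ⊓
        (⨆ v ∈ {w | w ∈ BA.Delta N ∧ t ≤ w 2}, B v) = ⊥) ∧
    (r + s + t ≤ N →
      (⨆ v ∈ {w | w ∈ BA.Delta N ∧ r ≤ w 0}, B v) ⊓
        (⨆ v ∈ {w | w ∈ BA.Delta N ∧ s ≤ w 1}, B v) ⊓
        (⨆ v ∈ {w | w ∈ BA.Delta N ∧ t ≤ w 2}, B v) =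
      ⨆ v ∈ {w | w ∈ BA.Delta N ∧ r ≤ w 0 ∧ s ≤ w 1 ∧ t ≤ w 2}, B v) := by
  classical
  have hfd : FiniteDimensional F V := FiniteDimensional.of_finrank_pos (by rw [hV]; omega)
  -- the line with first coordinate 0 gives a basis
  have hYmem : ∀ j : Fin (N+1), (![0, (j:ℕ), N - (j:ℕ)] : Fin 3 → ℕ) ∈ BA.Delta N :=
    fun j => mem_delta (by have := j.2; omega)
  have hex : ∀ j : Fin (N+1), ∃ x : V, x ∈ B ![0,(j:ℕ),N-(j:ℕ)] ∧ x ≠ 0 := by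
    intro j
    obtain ⟨x, hx, hx0⟩ := (Submodule.ne_bot_iff _).1 (ne_bot_of_one (hB.1 _ (hYmem j)))
    exact ⟨x, hx, hx0⟩
  choose y hy hy0 using hex
  have hYspan : ∀ j : Fin (N+1), Submodule.span F {y j} = B ![0,(j:ℕ),N-(j:ℕ)] :=
    fun j => span_eq_of_mem (hB.1 _ (hYmem j)) (hy j) (hy0 j)
  have hline0 : BA.IsLine N {w ∈ BA.Delta N | w 0 = 0} := ⟨0, 0, Nat.zero_le N, rfl⟩
  have hYind : iSupIndep (fun j : Fin (N+1) => B ![0,(j:ℕ),N-(j:ℕ)]) := by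
    have hinj : Function.Injective (fun j : Fin (N+1) =>
        (⟨![0,(j:ℕ),N-(j:ℕ)], ⟨hYmem j, rfl⟩⟩ : {w // w ∈ {w ∈ BA.Delta N | w 0 = 0}})) := by
      intro i j hij
      have := congrFun (congrArg Subtype.val hij) 1
      simp only [Matrix.cons_val_one, Matrix.head_cons] at this
      exact Fin.ext this
    exact (hB.2.1 _ hline0).comp hinj
  have hli : LinearIndependent F y := hYind.linearIndependent _ hy hy0
  let bas : Basis (Fin (N+1)) F V := basisOfLinearIndependentOfCardEqFinrank hli (by simp [hV])
  have hbas : ⇑bas = y := coe_basisOfLinearIndependentOfCardEqFinrank hli _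
  have hmemYS : ∀ (S : Set (Fin (N+1))) (v : V),
      v ∈ Submodule.span F (y '' S) ↔ ∀ i, bas.repr v i ≠ 0 → i ∈ S := by
    intro S v
    rw [← hbas, Basis.mem_span_image]
    constructor
    · intro h i hi
      exact h (by simpa using Finsupp.mem_support_iff.2 hi)
    · intro h i hi
      exact h i (Finsupp.mem_support_iff.1 (by simpa using hi))
  -- key structural lemma: supports of elements of B ![a,b,c]
  have key : ∀ a b c, a + b + c = N → ∀ v ∈ B ![a,b,c],
      (∀ i : Fin (N+1), bas.repr v i ≠ 0 → b ≤ (i:ℕ) ∧ (i:ℕ) ≤ b + a) ∧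
      (v ≠ 0 → ∀ i : Fin (N+1), ((i:ℕ) = b ∨ (i:ℕ) = b + a) → bas.repr v i ≠ 0) := by
    intro a
    induction a with
    | zero =>
      intro b c habc v hv
      have hbN : b ≤ N := by omega
      have hloc : (![0, ((⟨b, by omega⟩ : Fin (N+1)):ℕ), N - ((⟨b, by omega⟩ : Fin (N+1)):ℕ)] :
          Fin 3 → ℕ) = ![0,b,c] := by
        show (![0, b, N - b] : Fin 3 → ℕ) = ![0,b,c]
        rw [show N - b = c from by omega]
      have hv' : v ∈ Submodule.span F {y ⟨b, by omega⟩} := by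
        rw [hYspan ⟨b, by omega⟩, hloc]; exact hv
      obtain ⟨k, rfl⟩ := Submodule.mem_span_singleton.1 hv'
      have hrepr : ∀ i : Fin (N+1),
          bas.repr (k • y ⟨b, by omega⟩) i = k * (Finsupp.single (⟨b, by omega⟩ : Fin (N+1)) (1:F)) i := by
        intro i
        rw [map_smul, ← hbas, Basis.repr_self, Finsupp.smul_apply, smul_eq_mul]
      constructor
      · intro i hi
        rw [hrepr i] at hi
        by_cases hij : (⟨b, by omega⟩ : Fin (N+1)) = i
        · have : (i:ℕ) = b := by rw [← hij]
          omega
        · exfalso; apply hi; rw [Finsupp.single_apply, if_neg hij]; ring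
      · intro hv0 i hival
        have hk : k ≠ 0 := fun h => hv0 (by rw [h, zero_smul])
        have hvb : (i:ℕ) = b := by rcases hival with h | h <;> omega
        have hji : (⟨b, by omega⟩ : Fin (N+1)) = i := Fin.ext hvb.symm
        rw [hrepr i, Finsupp.single_apply, if_pos hji]
        simpa using hk
    | succ a ih =>
      intro b c habc v hv
      have hcl := (clique hB (a := a) (b := b) (c := c) (by omega)).1
      obtain ⟨u, hu, w, hw, huw⟩ := Submodule.mem_sup.1 (hcl hv)
      have ihu := ih (b+1) c (by omega) u hu
      have ihw := ih b (c+1) (by omega) w hw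
      have hsum : ∀ i : Fin (N+1), bas.repr v i = bas.repr u i + bas.repr w i := by
        intro i; rw [← huw, map_add, Finsupp.add_apply]
      constructor
      · intro i hi
        by_cases h1 : bas.repr u i = 0
        · have h2 : bas.repr w i ≠ 0 := by
            intro h2; apply hi; rw [hsum i, h1, h2, add_zero]
          have := (ihw.1) i h2; omega
        · have := (ihu.1) i h1; omega
      · intro hv0 i hival
        have m1 : (![a+1,b,c] : Fin 3 → ℕ) ∈ BA.Delta N := mem_delta (by omega)
        have m2 : (![a,b+1,c] : Fin 3 → ℕ) ∈ BA.Delta N := mem_delta (by omega)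
        have m3 : (![a,b,c+1] : Fin 3 → ℕ) ∈ BA.Delta N := mem_delta (by omega)
        have hu0 : u ≠ 0 := by
          rintro rfl
          rw [zero_add] at huw
          have hd : Disjoint (B ![a+1,b,c]) (B ![a,b,c+1]) :=
            disj hB m1 m3 1 (by simp; omega) (by simp)
              (by intro hE; have := congrFun hE 0; simp at this)
          exact hv0 ((Submodule.mem_bot F).1 (hd.le_bot ⟨hv, huw ▸ hw⟩))
        have hw0 : w ≠ 0 := by
          rintro rfl
          rw [add_zero] at huw
          have hd : Disjoint (B ![a+1,b,c]) (B ![a,b+1,c]) :=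
            disj hB m1 m2 2 (by simp; omega) (by simp)
              (by intro hE; have := congrFun hE 0; simp at this)
          exact hv0 ((Submodule.mem_bot F).1 (hd.le_bot ⟨hv, huw ▸ hu⟩))
        rcases hival with hbv | hbav
        · have h1 : bas.repr u i = 0 := by
            by_contra h
            have := (ihu.1) i h; omega
          have h2 : bas.repr w i ≠ 0 := ihw.2 hw0 i (Or.inl hbv)
          rw [hsum i, h1, zero_add]; exact h2
        · have h2 : bas.repr w i = 0 := by
            by_contra h
            have := (ihw.1) i h; omega
          have h1 : bas.repr u i ≠ 0 := ihu.2 hu0 i (Or.inr (by omega))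
          rw [hsum i, h2, add_zero]; exact h1
  -- descent: everything with first coordinate ≥ r lies in the span of the line λ₁ = r
  have desc : ∀ d b c, r + d + b + c = N →
      B ![r + d, b, c] ≤ ⨆ j : {j : ℕ // r + j ≤ N}, B ![r, j.1, N - r - j.1] := by
    intro d
    induction d with
    | zero =>
      intro b c h
      have e : N - r - b = c := by omega
      have hle : B ![r, b, N - r - b] ≤ ⨆ j : {j : ℕ // r + j ≤ N}, B ![r, j.1, N - r - j.1] :=
        le_iSup (fun j : {j : ℕ // r + j ≤ N} => B ![r, j.1, N - r - j.1]) ⟨b, by omega⟩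
      rw [e] at hle
      exact hle
    | succ d ih =>
      intro b c h
      have hcl := (clique hB (a := r + d) (b := b) (c := c) (by omega)).1
      exact hcl.trans (sup_le (ih (b+1) c (by omega)) (ih b (c+1) (by omega)))
  have hS1 : (⨆ v ∈ {w | w ∈ BA.Delta N ∧ r ≤ w 0}, B v) ≤
      ⨆ j : {j : ℕ // r + j ≤ N}, B ![r, j.1, N - r - j.1] := by
    refine iSup₂_le fun w hw => ?_
    obtain ⟨hΔ, hrw⟩ := hw
    have hsum : w 0 + w 1 + w 2 = N := hΔ
    have h1 : w = ![r + (w 0 - r), w 1, w 2] := by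
      conv_lhs => rw [vec_eq w]
      rw [show r + (w 0 - r) = w 0 from by omega]
    rw [h1]
    exact desc (w 0 - r) (w 1) (w 2) (by omega)
  have hS2 : (⨆ v ∈ {w | w ∈ BA.Delta N ∧ s ≤ w 1}, B v) ≤
      Submodule.span F (y '' {i : Fin (N+1) | s ≤ (i:ℕ)}) := by
    refine iSup₂_le fun w hw => ?_
    obtain ⟨hΔ, hsw⟩ := hw
    have hsum : w 0 + w 1 + w 2 = N := hΔ
    intro v hv
    have hv' : v ∈ B ![w 0, w 1, w 2] := by rw [← vec_eq w]; exact hv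
    have hk := (key (w 0) (w 1) (w 2) (by omega) v hv').1
    exact (hmemYS _ v).2 fun i hi => le_trans hsw (hk i hi).1
  have hS3 : (⨆ v ∈ {w | w ∈ BA.Delta N ∧ t ≤ w 2}, B v) ≤
      Submodule.span F (y '' {i : Fin (N+1) | (i:ℕ) + t ≤ N}) := by
    refine iSup₂_le fun w hw => ?_
    obtain ⟨hΔ, htw⟩ := hw
    have hsum : w 0 + w 1 + w 2 = N := hΔ
    intro v hv
    have hv' : v ∈ B ![w 0, w 1, w 2] := by rw [← vec_eq w]; exact hv
    have hk := (key (w 0) (w 1) (w 2) (by omega) v hv').1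
    refine (hmemYS _ v).2 fun i hi => ?_
    have := (hk i hi).2
    show (i:ℕ) + t ≤ N
    omega
  -- the main inclusion
  have hmain : (⨆ v ∈ {w | w ∈ BA.Delta N ∧ r ≤ w 0}, B v) ⊓
        (⨆ v ∈ {w | w ∈ BA.Delta N ∧ s ≤ w 1}, B v) ⊓
        (⨆ v ∈ {w | w ∈ BA.Delta N ∧ t ≤ w 2}, B v) ≤
      ⨆ v ∈ {w | w ∈ BA.Delta N ∧ r ≤ w 0 ∧ s ≤ w 1 ∧ t ≤ w 2}, B v := by
    intro v hv
    rw [Submodule.mem_inf, Submodule.mem_inf] at hv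
    obtain ⟨⟨hv1, hv2⟩, hv3⟩ := hv
    have hb2 : ∀ i : Fin (N+1), bas.repr v i ≠ 0 → s ≤ (i:ℕ) :=
      fun i hi => (hmemYS _ v).1 (hS2 hv2) i hi
    have hb3 : ∀ i : Fin (N+1), bas.repr v i ≠ 0 → (i:ℕ) + t ≤ N :=
      fun i hi => (hmemYS _ v).1 (hS3 hv3) i hi
    have hvz := hS1 hv1
    rw [Submodule.mem_iSup_iff_exists_finsupp] at hvz
    obtain ⟨f, hf, hfs⟩ := hvz
    have hkey : ∀ j : {j : ℕ // r + j ≤ N},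
        (∀ i : Fin (N+1), bas.repr (f j) i ≠ 0 → j.1 ≤ (i:ℕ) ∧ (i:ℕ) ≤ j.1 + r) ∧
        (f j ≠ 0 → ∀ i : Fin (N+1), ((i:ℕ) = j.1 ∨ (i:ℕ) = j.1 + r) → bas.repr (f j) i ≠ 0) := by
      intro j
      have hj2 : r + j.1 ≤ N := j.2
      have h := key r j.1 (N - r - j.1) (by omega) (f j) (hf j)
      exact ⟨fun i hi => by have := h.1 i hi; omega,
        fun h0 i hiv => h.2 h0 i (by omega)⟩
    have hrepr : ∀ i : Fin (N+1), bas.repr v i = ∑ j ∈ f.support, bas.repr (f j) i := by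
      intro i
      rw [← hfs, Finsupp.sum, map_sum, Finset.sum_apply']
    by_cases hJ : f.support = ∅
    · have hv0 : v = 0 := by rw [← hfs, Finsupp.sum, hJ, Finset.sum_empty]
      rw [hv0]; exact Submodule.zero_mem _
    have hJne : f.support.Nonempty := Finset.nonempty_iff_ne_empty.2 hJ
    set j0 := f.support.min' hJne with hj0def
    set j1 := f.support.max' hJne with hj1def
    have hj0N : r + j0.1 ≤ N := j0.2
    have hj1N : r + j1.1 ≤ N := j1.2
    -- bottom index
    have h0 : bas.repr v ⟨j0.1, by omega⟩ = bas.repr (f j0) ⟨j0.1, by omega⟩ := by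
      rw [hrepr]
      refine Finset.sum_eq_single_of_mem j0 (f.support.min'_mem hJne) ?_
      intro j hj hjne
      by_contra hnz
      have h1 : j.1 ≤ j0.1 := ((hkey j).1 _ hnz).1
      have h3 : j0.1 ≤ j.1 := f.support.min'_le j hj
      have h4 : j.1 ≠ j0.1 := fun h => hjne (Subtype.ext h)
      omega
    have hne0 : bas.repr (f j0) ⟨j0.1, by omega⟩ ≠ 0 :=
      (hkey j0).2 (Finsupp.mem_support_iff.1 (f.support.min'_mem hJne)) _ (Or.inl rfl)
    have hs0 : s ≤ j0.1 := hb2 _ (by rw [h0]; exact hne0)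
    -- top index
    have h1eq : bas.repr v ⟨j1.1 + r, by omega⟩ = bas.repr (f j1) ⟨j1.1 + r, by omega⟩ := by
      rw [hrepr]
      refine Finset.sum_eq_single_of_mem j1 (f.support.max'_mem hJne) ?_
      intro j hj hjne
      by_contra hnz
      have h1 : j1.1 + r ≤ j.1 + r := ((hkey j).1 _ hnz).2
      have h2 : j.1 ≤ j1.1 := f.support.le_max' j hj
      have h4 : j.1 ≠ j1.1 := fun h => hjne (Subtype.ext h)
      omega
    have hne1 : bas.repr (f j1) ⟨j1.1 + r, by omega⟩ ≠ 0 :=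
      (hkey j1).2 (Finsupp.mem_support_iff.1 (f.support.max'_mem hJne)) _ (Or.inr rfl)
    have ht1 : j1.1 + r + t ≤ N := hb3 _ (by rw [h1eq]; exact hne1)
    -- conclude
    rw [← hfs, Finsupp.sum]
    refine Submodule.sum_mem _ fun j hj => ?_
    have hj2 : r + j.1 ≤ N := j.2
    have hjs : s ≤ j.1 := le_trans hs0 (f.support.min'_le j hj)
    have hjt : j.1 ≤ j1.1 := f.support.le_max' j hj
    have hloc : (![r, j.1, N - r - j.1] : Fin 3 → ℕ) ∈
        {w | w ∈ BA.Delta N ∧ r ≤ w 0 ∧ s ≤ w 1 ∧ t ≤ w 2} := by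
      refine ⟨mem_delta (by omega), ?_, ?_, ?_⟩ <;>
        simp only [Matrix.cons_val_zero, Matrix.cons_val_one, Matrix.head_cons,
          Matrix.cons_val_two, Matrix.tail_cons] <;> omega
    exact le_iSup₂ (f := fun w (_ : w ∈ {w | w ∈ BA.Delta N ∧ r ≤ w 0 ∧ s ≤ w 1 ∧ t ≤ w 2}) => B w)
      _ hloc (hf j)
  constructor
  · intro hgt
    refine le_bot_iff.1 (hmain.trans (iSup₂_le fun w hw => ?_))
    exfalso
    obtain ⟨hΔ, h1, h2, h3⟩ := hw
    have hsum : w 0 + w 1 + w 2 = N := hΔ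
    omega
  · intro hle
    refine le_antisymm hmain (iSup₂_le fun w hw => ?_)
    obtain ⟨hΔ, h1, h2, h3⟩ := hw
    exact le_inf (le_inf
      (le_iSup₂ (f := fun w (_ : w ∈ {w | w ∈ BA.Delta N ∧ r ≤ w 0}) => B w) w ⟨hΔ, h1⟩)
      (le_iSup₂ (f := fun w (_ : w ∈ {w | w ∈ BA.Delta N ∧ s ≤ w 1}) => B w) w ⟨hΔ, h2⟩))
      (le_iSup₂ (f := fun w (_ : w ∈ {w | w ∈ BA.Delta N ∧ t ≤ w 2}) => B w) w ⟨hΔ, h3⟩)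
end
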